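/- arXiv:2112.09005 — 3 statements merged into one kernel-verified Lean document; each statement's English description precedes it below -/
import Mathlib

section
/- Covariance decomposition identity: let |φ⟩ ∈ ℂ² be a unit vector, |Φ⟩ = |φ⟩^{⊗n}, Q = I − |φ⟩⟨φ|, and for j ∈ {1,…,n} let P_j = (|φ⟩⟨φ|)^{⊗(j−1)} ⊗ Q ⊗ I^{⊗(n−j)}. Then for any unitary U on (ℂ²)^{⊗n} and any operators K₁, K₂ on (ℂ²)^{⊗n}: ⟨Φ|U† K₁ K₂ U|Φ⟩ − ⟨Φ|U† K₁ U|Φ⟩⟨Φ|U† K₂ U|Φ⟩ = Σ_{j=1}^n ⟨Φ| (U† K₁ U) P_j (U† K₂ U) |Φ⟩. -/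
open Matrix Finset
open scoped Kronecker ComplexConjugate

noncomputable section

/-- Configuration space of `n` qubits. -/
abbrev QState (n : ℕ) := Fin n → Fin 2

/-- Operators (matrices) on the Hilbert space `(ℂ²)^{⊗n}` of `n` qubits. -/
abbrev NOp (n : ℕ) := Matrix (QState n) (QState n) ℂ

/-- One-qubit operators. -/
abbrev Op2 := Matrix (Fin 2) (Fin 2) ℂ

/-- Two-qubit operators. -/
abbrev Op4 := Matrix (Fin 2 × Fin 2) (Fin 2 × Fin 2) ℂ

/-- The trace norm `‖A‖₁ = tr √(A†A)`, computed as the sum of the square roots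
of the eigenvalues of the positive semidefinite matrix `A†A`. -/
def traceNorm {m : Type*} [Fintype m] [DecidableEq m] (A : Matrix m m ℂ) : ℝ :=
  ∑ i, Real.sqrt ((Matrix.isHermitian_conjTranspose_mul_self A).eigenvalues i)

/-- The Pauli matrices σ¹, σ², σ³. -/
def pauli : Fin 3 → Op2
  | 0 => !![0, 1; 1, 0]
  | 1 => !![0, -Complex.I; Complex.I, 0]
  | 2 => !![1, 0; 0, -1]

/-- The two-qubit interaction `V₁₂ = Σ_μ V_μ σ^μ ⊗ σ^μ`. -/
def Vint (V : Fin 3 → ℝ) : Op4 := ∑ μ, (V μ : ℂ) • (pauli μ ⊗ₖ pauli μ)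

/-- Embed a one-qubit operator at site `i` of the `n`-qubit lattice (identity elsewhere). -/
def onSite {n : ℕ} (i : Fin n) (A : Op2) : NOp n :=
  Matrix.of fun x y => A (x i) (y i) * ∏ j ∈ Finset.univ.erase i, (if x j = y j then (1 : ℂ) else 0)

/-- Embed a two-qubit operator at the ordered pair of sites `(i, j)` (identity elsewhere). -/
def onPair {n : ℕ} (i j : Fin n) (M : Op4) : NOp n :=
  Matrix.of fun x y => M (x i, x j) (y i, y j) *
    ∏ l ∈ (Finset.univ.erase i).erase j, (if x l = y l then (1 : ℂ) else 0)

/-- The central spin Hamiltonian `H = Σ_i H⁰_i + (1/(n-1)) Σ_{i≠0} V_{0i}`;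
qubit `0` is the central qubit and `V` lists the three couplings `V_μ`. -/
def centralH (n : ℕ) [NeZero n] (H0 : Op2) (V : Fin 3 → ℝ) : NOp n :=
  (∑ i, onSite i H0) +
    ((n : ℂ) - 1)⁻¹ • ∑ i ∈ Finset.univ.erase (0 : Fin n), onPair 0 i (Vint V)

/-- `H(t) - H^{(k)}(t) = (1/(n-1)) Σ_{i ≥ k} V_{0i}`: the interactions removed from the
modified Hamiltonian `H^{(k)}` (the first `k` qubits `0,…,k-1` are decoupled from the rest). -/
def Hrest (n : ℕ) [NeZero n] (V : Fin 3 → ℝ) (k : ℕ) : NOp n :=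
  ((n : ℂ) - 1)⁻¹ • ∑ i ∈ Finset.univ.filter (fun i : Fin n => k ≤ (i : ℕ)), onPair 0 i (Vint V)

/-- `𝓗^{(k)}(t) = U_t† (H(t) - H^{(k)}(t)) U_t`. -/
def scriptH (n : ℕ) [NeZero n] (V : Fin 3 → ℝ) (k : ℕ) (Ut : NOp n) : NOp n :=
  Utᴴ * Hrest n V k * Ut

/-- An operator on `n` qubits is supported on the set `S` of qubits if it is a matrix on
the qubits in `S` tensored with the identity on all other qubit factors. -/
def SupportedOn {n : ℕ} (S : Finset (Fin n)) (A : NOp n) : Prop :=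
  ∃ M : Matrix (∀ _ : S, Fin 2) (∀ _ : S, Fin 2) ℂ, ∀ x y : QState n,
    A x y = M (fun i => x i.1) (fun i => y i.1) *
      ∏ j ∈ Finset.univ \ S, (if x j = y j then (1 : ℂ) else 0)

/-- The product state vector `|Φ⟩ = |φ⟩^{⊗n}`. -/
def prodVec {n : ℕ} (φ : Fin 2 → ℂ) : QState n → ℂ := fun x => ∏ i, φ (x i)

/-- The one-qubit projector `|φ⟩⟨φ|`. -/
def proj (φ : Fin 2 → ℂ) : Op2 := Matrix.of fun a b => φ a * conj (φ b)

/-- The product density matrix `(|φ⟩⟨φ|)^{⊗n}`. -/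
def prodState (n : ℕ) (φ : Fin 2 → ℂ) : NOp n :=
  Matrix.of fun x y => prodVec φ x * conj (prodVec φ y)

/-- Partial trace over all qubits except the central qubit `0`. -/
def ptraceC {n : ℕ} [NeZero n] (ρ : NOp n) : Op2 :=
  Matrix.of fun a b => ∑ g : QState n, if g 0 = b then ρ (Function.update g 0 a) g else 0

/-- Partial trace over all qubits except qubits `0` and `1` (the two-qubit reduced state). -/
def ptrace01 {n : ℕ} [NeZero n] (ρ : NOp n) : Op4 :=
  Matrix.of fun p q => ∑ g : QState n,
    if g 0 = q.1 ∧ g 1 = q.2 then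
      ρ (Function.update (Function.update g 0 p.1) 1 p.2) g else 0

/-- Trace over the second factor of a two-qubit operator. -/
def ptrace2 (M : Op4) : Op2 := Matrix.of fun a b => ∑ c, M (a, c) (b, c)

/-- Commutator of matrices. -/
def matComm {m : Type*} [Fintype m] (A B : Matrix m m ℂ) : Matrix m m ℂ := A * B - B * A

/-- Quantum expectation value `⟨ψ|M|ψ⟩`. -/
def expval {n : ℕ} (ψ : QState n → ℂ) (M : NOp n) : ℂ := star ψ ⬝ᵥ M.mulVec ψ

/-- `Q = I - |φ⟩⟨φ|`. -/
def Qop (φ : Fin 2 → ℂ) : Op2 := 1 - proj φ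

/-- `P_j = (|φ⟩⟨φ|)^{⊗ j} ⊗ Q ⊗ I^{⊗(n-j-1)}` (qubits indexed from 0). -/
def Pop {n : ℕ} (φ : Fin 2 → ℂ) (j : Fin n) : NOp n :=
  Matrix.of fun x y =>
    (∏ i ∈ Finset.univ.filter (fun i : Fin n => i < j), (φ (x i) * conj (φ (y i)))) *
    Qop φ (x j) (y j) *
    ∏ i ∈ Finset.univ.filter (fun i : Fin n => j < i), (if x i = y i then (1 : ℂ) else 0)

/-- The SWAP unitary `χ_{ij}` exchanging tensor factors `i` and `j`. -/
def swapOp (n : ℕ) (i j : Fin n) : NOp n :=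
  Matrix.of fun x y => if x = y ∘ (Equiv.swap i j) then (1 : ℂ) else 0

/-- The normalized commutator supremum `C_k` of the Lieb–Robinson bound, at a fixed time with
evolution operator `Ut`: the sup over nonzero `A` supported on qubits `{0,…,k-1}` and nonzero
`B` supported on qubit `k` of `‖[U† A U, B]‖₁/(‖A‖₁‖B‖₁)`. -/
def Cnorm {n : ℕ} (Ut : NOp n) (k : ℕ) : ℝ :=
  sSup {r : ℝ | ∃ A B : NOp n,
    SupportedOn (Finset.univ.filter fun i : Fin n => (i : ℕ) < k) A ∧ A ≠ 0 ∧
    SupportedOn (Finset.univ.filter fun i : Fin n => (i : ℕ) = k) B ∧ B ≠ 0 ∧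
    r = traceNorm (matComm (Utᴴ * A * Ut) B) / (traceNorm A * traceNorm B)}



/-- Partial product-projector: projector on the first `k` qubits, identity elsewhere. -/
def Dop (n : ℕ) (φ : Fin 2 → ℂ) (k : ℕ) : NOp n :=
  Matrix.of fun x y =>
    (∏ i ∈ Finset.univ.filter (fun i : Fin n => (i : ℕ) < k), (φ (x i) * conj (φ (y i)))) *
    ∏ i ∈ Finset.univ.filter (fun i : Fin n => k ≤ (i : ℕ)), (if x i = y i then (1 : ℂ) else 0)

lemma Dop_zero (n : ℕ) (φ : Fin 2 → ℂ) : Dop n φ 0 = 1 := by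
  ext x y
  have hb : (∏ i : Fin n, (if x i = y i then (1 : ℂ) else 0)) = if x = y then 1 else 0 := by
    rw [Finset.prod_boole]
    simp [funext_iff]
  simp [Dop, Matrix.one_apply, hb]

lemma Dop_top (n : ℕ) (φ : Fin 2 → ℂ) : Dop n φ n = prodState n φ := by
  ext x y
  have h1 : Finset.univ.filter (fun i : Fin n => (i : ℕ) < n) = Finset.univ := by
    simp [Finset.filter_true_of_mem, Fin.is_lt]
  have h2 : Finset.univ.filter (fun i : Fin n => n ≤ (i : ℕ)) = ∅ := by
    ext i; simp [Nat.not_le.mpr i.is_lt]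
  simp only [Dop, Matrix.of_apply, h1, h2, Finset.prod_empty, mul_one,
    prodState, prodVec, Finset.prod_mul_distrib, map_prod]

lemma Pop_eq_sub (n : ℕ) (φ : Fin 2 → ℂ) (j : Fin n) :
    Pop φ j = Dop n φ (j : ℕ) - Dop n φ ((j : ℕ) + 1) := by
  ext x y
  have hjmem1 : j ∉ Finset.univ.filter (fun i : Fin n => (j : ℕ) < (i : ℕ)) := by simp
  have hjmem2 : j ∉ Finset.univ.filter (fun i : Fin n => (i : ℕ) < (j : ℕ)) := by simp
  have h1 : Finset.univ.filter (fun i : Fin n => (j : ℕ) ≤ (i : ℕ)) =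
      insert j (Finset.univ.filter (fun i : Fin n => (j : ℕ) < (i : ℕ))) := by
    ext i
    simp only [Finset.mem_filter, Finset.mem_univ, true_and, Finset.mem_insert, Fin.ext_iff]
    omega
  have h2 : Finset.univ.filter (fun i : Fin n => (i : ℕ) < (j : ℕ) + 1) =
      insert j (Finset.univ.filter (fun i : Fin n => (i : ℕ) < (j : ℕ))) := by
    ext i
    simp only [Finset.mem_filter, Finset.mem_univ, true_and, Finset.mem_insert, Fin.ext_iff]
    omega
  have hlt : ∀ i : Fin n, (i < j) = ((i : ℕ) < (j : ℕ)) := fun i => rfl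
  have hgt : ∀ i : Fin n, (j < i) = ((j : ℕ) < (i : ℕ)) := fun i => rfl
  have h3 : Finset.univ.filter (fun i : Fin n => (j : ℕ) + 1 ≤ (i : ℕ)) =
      Finset.univ.filter (fun i : Fin n => (j : ℕ) < (i : ℕ)) :=
    Finset.filter_congr fun i _ => by omega
  simp only [Pop, Dop, Qop, proj, Matrix.of_apply, Matrix.sub_apply, Matrix.one_apply,
    h1, h2, h3, Finset.prod_insert hjmem1, Finset.prod_insert hjmem2, hlt, hgt]
  ring

lemma resolution (n : ℕ) (φ : Fin 2 → ℂ) :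
    prodState n φ + ∑ j : Fin n, Pop φ j = 1 := by
  have hsum : ∑ j : Fin n, Pop φ j
      = ∑ j ∈ Finset.range n, (Dop n φ j - Dop n φ (j + 1)) := by
    rw [← Fin.sum_univ_eq_sum_range]
    exact Finset.sum_congr rfl fun j _ => Pop_eq_sub n φ j
  rw [hsum, Finset.sum_range_sub' (fun k => Dop n φ k), Dop_zero, Dop_top]
  abel

lemma expval_proj_mul {n : ℕ} (φ : Fin 2 → ℂ) (A B : NOp n) :
    expval (prodVec φ) (A * prodState n φ * B)
      = expval (prodVec φ) A * expval (prodVec φ) B := by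
  classical
  have hP : prodState n φ = vecMulVec (prodVec φ) (star (prodVec φ)) := by
    ext x y; simp [prodState, vecMulVec_apply, Pi.star_apply, RCLike.star_def]
  have hmv : ∀ w : QState n → ℂ,
      (vecMulVec (prodVec (n := n) φ) (star (prodVec (n := n) φ))).mulVec w
        = (star (prodVec (n := n) φ) ⬝ᵥ w) • prodVec (n := n) φ := by
    intro w
    funext x
    simp [vecMulVec_apply, Matrix.mulVec, dotProduct, Finset.sum_mul, Finset.mul_sum]
    ring_nf
  simp only [expval, hP, ← Matrix.mulVec_mulVec, hmv, Matrix.mulVec_smul,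
    dotProduct_smul, smul_eq_mul]
  ring

lemma expval_add {n : ℕ} (ψ : QState n → ℂ) (M N : NOp n) :
    expval ψ (M + N) = expval ψ M + expval ψ N := by
  simp [expval, Matrix.add_mulVec, dotProduct_add]

lemma expval_sum {n : ℕ} (ψ : QState n → ℂ) {ι : Type*} (s : Finset ι) (f : ι → NOp n) :
    expval ψ (∑ j ∈ s, f j) = ∑ j ∈ s, expval ψ (f j) := by
  classical
  induction s using Finset.induction_on with
  | empty => simp [expval]
  | insert _ _ h ih => simp [Finset.sum_insert h, expval_add, ih]

theorem statement4
    (n : ℕ)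
    (φ : Fin 2 → ℂ) (hφ : ∑ a, Complex.normSq (φ a) = 1)
    (U : NOp n) (hU : Uᴴ * U = 1)
    (K₁ K₂ : NOp n) :
    expval (prodVec φ) (Uᴴ * (K₁ * K₂) * U)
        - expval (prodVec φ) (Uᴴ * K₁ * U) * expval (prodVec φ) (Uᴴ * K₂ * U)
      = ∑ j : Fin n, expval (prodVec φ) ((Uᴴ * K₁ * U) * Pop φ j * (Uᴴ * K₂ * U)) := by
  classical
  have hUU : U * Uᴴ = 1 := mul_eq_one_comm.mp hU
  set A := Uᴴ * K₁ * U with hA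
  set B := Uᴴ * K₂ * U with hB
  have hAB : Uᴴ * (K₁ * K₂) * U = A * B := by
    simp only [hA, hB, Matrix.mul_assoc]
    rw [show U * (Uᴴ * (K₂ * U)) = K₂ * U by rw [← Matrix.mul_assoc, hUU, Matrix.one_mul]]
  have hres := resolution n φ
  calc expval (prodVec φ) (Uᴴ * (K₁ * K₂) * U) - expval (prodVec φ) A * expval (prodVec φ) B
      = expval (prodVec φ) (A * (prodState n φ + ∑ j : Fin n, Pop φ j) * B)
          - expval (prodVec φ) A * expval (prodVec φ) B := by rw [hres, hAB]; simp
    _ = ∑ j : Fin n, expval (prodVec φ) (A * Pop φ j * B) := by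
        rw [Matrix.mul_add, Matrix.add_mul, expval_add, expval_proj_mul,
          Finset.mul_sum, Finset.sum_mul, expval_sum]
        ring


end
end

section
/- Linear (BBGKY) integral equation: the exact reduced density matrix of the central qubit satisfies ρᶜ(t) = u_t |φ⟩⟨φ| u_t† − i ∫₀^t (u_t u_τ†) tr₂[V₁₂(τ), tr_{3,…,n} ρ(τ)] (u_t u_τ†)† dτ for all t ≥ 0. -/
open Matrix Finset
open scoped Kronecker ComplexConjugate

noncomputable section

/-- entrywise derivative of a matrix-valued function -/
def MDeriv {m m' : Type*} (A : ℝ → Matrix m m' ℂ) (A' : Matrix m m' ℂ) (t : ℝ) : Prop :=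
  ∀ x y, HasDerivAt (fun s => A s x y) (A' x y) t

/-- entrywise continuity -/
def MCont {m m' : Type*} (A : ℝ → Matrix m m' ℂ) : Prop :=
  ∀ x y, Continuous fun s => A s x y

lemma MDeriv.mul {m m' m'' : Type*} [Fintype m'] {A : ℝ → Matrix m m' ℂ}
    {B : ℝ → Matrix m' m'' ℂ} {A' B' t}
    (hA : MDeriv A A' t) (hB : MDeriv B B' t) :
    MDeriv (fun s => A s * B s) (A' * B t + A t * B') t := by
  intro x y
  have h : ∀ k ∈ Finset.univ, HasDerivAt (fun s => A s x k * B s k y)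
      (A' x k * B t k y + A t x k * B' k y) t := fun k _ => (hA x k).mul (hB k y)
  have := HasDerivAt.fun_sum h
  simpa [Matrix.mul_apply, Matrix.add_apply, Finset.sum_add_distrib] using this

lemma MDeriv.conjTranspose {m m' : Type*} {A : ℝ → Matrix m m' ℂ} {A' t}
    (hA : MDeriv A A' t) : MDeriv (fun s => (A s)ᴴ) A'ᴴ t := by
  intro x y
  simpa [Matrix.conjTranspose_apply] using (hA y x).star

lemma MDeriv.const_smul {m m' : Type*} {A : ℝ → Matrix m m' ℂ} {A' t} (c : ℂ)
    (hA : MDeriv A A' t) : MDeriv (fun s => c • A s) (c • A') t := by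
  intro x y
  simpa [Matrix.smul_apply] using (hA x y).const_mul c

lemma MDeriv.zero_const {m m' : Type*} (A : Matrix m m' ℂ) (t : ℝ) :
    MDeriv (fun _ => A) 0 t := fun x y => by
  simpa using hasDerivAt_const t (A x y)

lemma MDeriv.congr_deriv {m m' : Type*} {A : ℝ → Matrix m m' ℂ} {A' A'' : Matrix m m' ℂ} {t}
    (hA : MDeriv A A' t) (h : A' = A'') : MDeriv A A'' t := h ▸ hA

lemma MDeriv.cont {m m' : Type*} {A : ℝ → Matrix m m' ℂ}
    (hA : ∀ t, ∃ A', MDeriv A A' t) : MCont A := by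
  intro x y
  rw [continuous_iff_continuousAt]
  intro t
  obtain ⟨A', h⟩ := hA t
  exact (h x y).continuousAt

lemma MCont.mul {m m' m'' : Type*} [Fintype m'] {A : ℝ → Matrix m m' ℂ}
    {B : ℝ → Matrix m' m'' ℂ} (hA : MCont A) (hB : MCont B) :
    MCont (fun s => A s * B s) := by
  intro x y
  simp only [Matrix.mul_apply]
  exact continuous_finset_sum _ fun k _ => (hA x k).mul (hB k y)

lemma MCont.conjTranspose {m m' : Type*} {A : ℝ → Matrix m m' ℂ} (hA : MCont A) :
    MCont (fun s => (A s)ᴴ) := fun x y => by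
  simpa [Matrix.conjTranspose_apply] using (hA y x).star

lemma MCont.sub {m m' : Type*} {A B : ℝ → Matrix m m' ℂ} (hA : MCont A) (hB : MCont B) :
    MCont (fun s => A s - B s) := fun x y => by
  exact (hA x y).sub (hB x y)

lemma MCont.smul {m m' : Type*} {c : ℝ → ℂ} {A : ℝ → Matrix m m' ℂ}
    (hc : Continuous c) (hA : MCont A) : MCont (fun s => c s • A s) := fun x y => by
  exact hc.mul (hA x y)

lemma MDeriv.ptraceC {n : ℕ} [NeZero n] {A : ℝ → NOp n} {A' t} (hA : MDeriv A A' t) :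
    MDeriv (fun s => ptraceC (A s)) (ptraceC A') t := by
  intro a b
  have h : ∀ g : QState n, ∀ _ : g ∈ Finset.univ,
      HasDerivAt (fun s => if g 0 = b then A s (Function.update g 0 a) g else 0)
        (if g 0 = b then A' (Function.update g 0 a) g else 0) t := by
    intro g _
    split
    · exact hA _ _
    · simpa using hasDerivAt_const t (0:ℂ)
  have := HasDerivAt.fun_sum h
  simp only [ptraceC, Matrix.of_apply]
  exact this

lemma MCont.ptraceC {n : ℕ} [NeZero n] {A : ℝ → NOp n} (hA : MCont A) :
    MCont (fun s => ptraceC (A s)) := by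
  intro a b
  simp only [ptraceC, Matrix.of_apply]
  refine continuous_finset_sum _ fun g _ => ?_
  split
  · exact hA _ _
  · exact continuous_const

lemma MCont.ptrace01 {n : ℕ} [NeZero n] {A : ℝ → NOp n} (hA : MCont A) :
    MCont (fun s => ptrace01 (A s)) := by
  intro p q
  simp only [ptrace01, Matrix.of_apply]
  refine continuous_finset_sum _ fun g _ => ?_
  split
  · exact hA _ _
  · exact continuous_const

lemma MCont.ptrace2 {A : ℝ → Op4} (hA : MCont A) :
    MCont (fun s => ptrace2 (A s)) := by
  intro a b
  show Continuous fun s => ∑ c, A s (a, c) (b, c)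
  exact continuous_finset_sum _ fun c _ => hA (a,c) (b,c)

lemma MCont.vint {V : Fin 3 → ℝ → ℝ} (hV : ∀ μ, Continuous (V μ)) :
    MCont (fun s => Vint (fun μ => V μ s)) := by
  intro p q
  simp only [Vint, Matrix.sum_apply, Matrix.smul_apply, smul_eq_mul]
  exact continuous_finset_sum _ fun μ _ =>
    ((Complex.continuous_ofReal.comp (hV μ)).mul continuous_const)

/-- A matrix function with zero entrywise derivative everywhere is constant. -/
lemma MDeriv.eq_const {m m' : Type*} {A : ℝ → Matrix m m' ℂ}
    (h : ∀ t, MDeriv A 0 t) (t : ℝ) : A t = A 0 := by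
  ext x y
  have hd : ∀ s, HasDerivAt (fun r => A r x y) 0 s := fun s => by simpa using h s x y
  have := is_const_of_deriv_eq_zero (f := fun r => A r x y)
    (fun s => (hd s).differentiableAt) (fun s => (hd s).deriv) t 0
  exact this
section Comb
variable {n : ℕ}

lemma indicator_prod_eq {i : Fin n} {x z : QState n} :
    (∏ j ∈ Finset.univ.erase i, (if x j = z j then (1:ℂ) else 0))
      = if ∀ j, j ≠ i → x j = z j then 1 else 0 := by
  by_cases h : ∀ j, j ≠ i → x j = z j
  · rw [if_pos h]
    refine Finset.prod_eq_one fun j hj => ?_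
    rw [if_pos (h j (Finset.mem_erase.mp hj).1)]
  · rw [if_neg h]
    push_neg at h
    obtain ⟨j, hj, hne⟩ := h
    exact Finset.prod_eq_zero (Finset.mem_erase.mpr ⟨hj, Finset.mem_univ j⟩) (if_neg hne)

lemma sum_indicator_update (i : Fin n) (x : QState n) (f : QState n → ℂ) :
    (∑ z : QState n, (∏ j ∈ Finset.univ.erase i, (if x j = z j then (1:ℂ) else 0)) * f z)
      = ∑ c, f (Function.update x i c) := by
  classical
  have key : ∀ z : QState n,
      (∏ j ∈ Finset.univ.erase i, (if x j = z j then (1:ℂ) else 0)) * f z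
        = ∑ c, if Function.update x i c = z then f (Function.update x i c) else 0 := by
    intro z
    rw [indicator_prod_eq]
    by_cases h : ∀ j, j ≠ i → x j = z j
    · have hz : z = Function.update x i (z i) := by
        funext j
        by_cases hj : j = i
        · subst hj; simp
        · rw [Function.update_of_ne hj]; exact (h j hj).symm
      rw [if_pos h, one_mul]
      have hcond : ∀ c : Fin 2, (Function.update x i c = z) ↔ c = z i := by
        intro c
        constructor
        · intro hc; rw [← hc]; simp
        · intro hc; rw [hc, ← hz]
      rw [Finset.sum_congr rfl (fun c _ => by rw [if_congr (hcond c) rfl rfl])]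
      rw [Finset.sum_ite_eq' Finset.univ (z i) (fun c => f (Function.update x i c))]
      rw [if_pos (Finset.mem_univ _), ← hz]
    · rw [if_neg h, zero_mul]
      symm
      refine Finset.sum_eq_zero fun c _ => ?_
      rw [if_neg]
      intro hc
      apply h
      intro j hj
      rw [← hc, Function.update_of_ne hj]
  rw [Finset.sum_congr rfl fun z _ => key z, Finset.sum_comm]
  refine Finset.sum_congr rfl fun c _ => ?_
  rw [Finset.sum_ite_eq Finset.univ (Function.update x i c)
    (fun _ => f (Function.update x i c))]
  rw [if_pos (Finset.mem_univ _)]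

lemma indicator_prod2_eq {i j : Fin n} {x z : QState n} :
    (∏ l ∈ (Finset.univ.erase i).erase j, (if x l = z l then (1:ℂ) else 0))
      = if ∀ l, l ≠ i → l ≠ j → x l = z l then 1 else 0 := by
  by_cases h : ∀ l, l ≠ i → l ≠ j → x l = z l
  · rw [if_pos h]
    refine Finset.prod_eq_one fun l hl => ?_
    have h2 := (Finset.mem_erase.mp hl).1
    have h1 := (Finset.mem_erase.mp (Finset.mem_erase.mp hl).2).1
    rw [if_pos (h l h1 h2)]
  · rw [if_neg h]
    push_neg at h
    obtain ⟨l, h1, h2, hne⟩ := h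
    exact Finset.prod_eq_zero
      (Finset.mem_erase.mpr ⟨h2, Finset.mem_erase.mpr ⟨h1, Finset.mem_univ l⟩⟩) (if_neg hne)

lemma update2_eq_iff {i j : Fin n} (hij : i ≠ j) {x : QState n} {c d c' d' : Fin 2} :
    Function.update (Function.update x i c) j d = Function.update (Function.update x i c') j d'
      ↔ c = c' ∧ d = d' := by
  constructor
  · intro h
    constructor
    · have := congrFun h i
      rwa [Function.update_of_ne hij, Function.update_of_ne hij, Function.update_self,
        Function.update_self] at this
    · have := congrFun h j
      rwa [Function.update_self, Function.update_self] at this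
  · rintro ⟨rfl, rfl⟩; rfl

lemma sum_indicator_update2 (i j : Fin n) (hij : i ≠ j) (x : QState n) (f : QState n → ℂ) :
    (∑ z : QState n,
        (∏ l ∈ (Finset.univ.erase i).erase j, (if x l = z l then (1:ℂ) else 0)) * f z)
      = ∑ c, ∑ d, f (Function.update (Function.update x i c) j d) := by
  classical
  have key : ∀ z : QState n,
      (∏ l ∈ (Finset.univ.erase i).erase j, (if x l = z l then (1:ℂ) else 0)) * f z
        = ∑ c, ∑ d, if Function.update (Function.update x i c) j d = z
            then f (Function.update (Function.update x i c) j d) else 0 := by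
    intro z
    rw [indicator_prod2_eq]
    by_cases h : ∀ l, l ≠ i → l ≠ j → x l = z l
    · have hz : z = Function.update (Function.update x i (z i)) j (z j) := by
        funext l
        by_cases hl : l = j
        · subst hl; simp
        · rw [Function.update_of_ne hl]
          by_cases hl' : l = i
          · subst hl'; rw [Function.update_self]
          · rw [Function.update_of_ne hl']; exact (h l hl' hl).symm
      rw [if_pos h, one_mul]
      have hcond : ∀ c d : Fin 2,
          (Function.update (Function.update x i c) j d = z) ↔ (c = z i ∧ d = z j) := by
        intro c d
        conv_lhs => rw [hz]
        rw [update2_eq_iff hij]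
      have step : ∀ c : Fin 2,
          (∑ d, if Function.update (Function.update x i c) j d = z
            then f (Function.update (Function.update x i c) j d) else 0)
          = if c = z i then f (Function.update (Function.update x i c) (j) (z j)) else 0 := by
        intro c
        by_cases hc : c = z i
        · rw [if_pos hc]
          rw [Finset.sum_congr rfl (fun d _ => by
            rw [if_congr (hcond c d) rfl rfl, if_congr (and_iff_right hc) rfl rfl])]
          rw [Finset.sum_ite_eq' Finset.univ (z j)
            (fun d => f (Function.update (Function.update x i c) j d))]
          rw [if_pos (Finset.mem_univ _)]
        · rw [if_neg hc]
          refine Finset.sum_eq_zero fun d _ => ?_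
          rw [if_congr (hcond c d) rfl rfl, if_neg (fun hcd => hc hcd.1)]
      rw [Finset.sum_congr rfl fun c _ => step c]
      rw [Finset.sum_ite_eq' Finset.univ (z i)
        (fun c => f (Function.update (Function.update x i c) j (z j)))]
      rw [if_pos (Finset.mem_univ _), ← hz]
    · rw [if_neg h, zero_mul]
      symm
      refine Finset.sum_eq_zero fun c _ => Finset.sum_eq_zero fun d _ => ?_
      rw [if_neg]
      intro hc
      apply h
      intro l h1 h2
      rw [← hc, Function.update_of_ne h2, Function.update_of_ne h1]
  rw [Finset.sum_congr rfl fun z _ => key z, Finset.sum_comm]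
  refine Finset.sum_congr rfl fun c _ => ?_
  rw [Finset.sum_comm]
  refine Finset.sum_congr rfl fun d _ => ?_
  rw [Finset.sum_ite_eq Finset.univ (Function.update (Function.update x i c) j d)
    (fun _ => f (Function.update (Function.update x i c) j d))]
  rw [if_pos (Finset.mem_univ _)]

end Comb
section Entries
variable {n : ℕ}

lemma onSite_mul_apply (i : Fin n) (A : Op2) (ρ : NOp n) (x y : QState n) :
    (onSite i A * ρ) x y = ∑ c, A (x i) c * ρ (Function.update x i c) y := by
  rw [Matrix.mul_apply]
  have h : ∀ z, onSite i A x z * ρ z y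
      = (∏ j ∈ Finset.univ.erase i, (if x j = z j then (1:ℂ) else 0))
        * (A (x i) (z i) * ρ z y) := by
    intro z; simp only [onSite, Matrix.of_apply]; ring
  rw [Finset.sum_congr rfl fun z _ => h z,
    sum_indicator_update i x (fun z => A (x i) (z i) * ρ z y)]
  refine Finset.sum_congr rfl fun c _ => ?_
  rw [Function.update_self]

lemma mul_onSite_apply (i : Fin n) (A : Op2) (ρ : NOp n) (x y : QState n) :
    (ρ * onSite i A) x y = ∑ c, ρ x (Function.update y i c) * A c (y i) := by
  rw [Matrix.mul_apply]
  have h : ∀ z, ρ x z * onSite i A z y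
      = (∏ j ∈ Finset.univ.erase i, (if y j = z j then (1:ℂ) else 0))
        * (A (z i) (y i) * ρ x z) := by
    intro z
    simp only [onSite, Matrix.of_apply]
    rw [Finset.prod_congr rfl (fun j _ => if_congr eq_comm rfl rfl)]
    ring
  rw [Finset.sum_congr rfl fun z _ => h z,
    sum_indicator_update i y (fun z => A (z i) (y i) * ρ x z)]
  refine Finset.sum_congr rfl fun c _ => ?_
  rw [Function.update_self]; ring

lemma onPair_mul_apply (i j : Fin n) (hij : i ≠ j) (M : Op4) (ρ : NOp n) (x y : QState n) :
    (onPair i j M * ρ) x y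
      = ∑ p, ∑ q, M (x i, x j) (p, q) * ρ (Function.update (Function.update x i p) j q) y := by
  rw [Matrix.mul_apply]
  have h : ∀ z, onPair i j M x z * ρ z y
      = (∏ l ∈ (Finset.univ.erase i).erase j, (if x l = z l then (1:ℂ) else 0))
        * (M (x i, x j) (z i, z j) * ρ z y) := by
    intro z; simp only [onPair, Matrix.of_apply]; ring
  rw [Finset.sum_congr rfl fun z _ => h z,
    sum_indicator_update2 i j hij x (fun z => M (x i, x j) (z i, z j) * ρ z y)]
  refine Finset.sum_congr rfl fun p _ => Finset.sum_congr rfl fun q _ => ?_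
  rw [Function.update_self, Function.update_of_ne hij, Function.update_self]

lemma mul_onPair_apply (i j : Fin n) (hij : i ≠ j) (M : Op4) (ρ : NOp n) (x y : QState n) :
    (ρ * onPair i j M) x y
      = ∑ p, ∑ q, ρ x (Function.update (Function.update y i p) j q) * M (p, q) (y i, y j) := by
  rw [Matrix.mul_apply]
  have h : ∀ z, ρ x z * onPair i j M z y
      = (∏ l ∈ (Finset.univ.erase i).erase j, (if y l = z l then (1:ℂ) else 0))
        * (M (z i, z j) (y i, y j) * ρ x z) := by
    intro z
    simp only [onPair, Matrix.of_apply]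
    rw [Finset.prod_congr rfl (fun l _ => if_congr eq_comm rfl rfl)]
    ring
  rw [Finset.sum_congr rfl fun z _ => h z,
    sum_indicator_update2 i j hij y (fun z => M (z i, z j) (y i, y j) * ρ x z)]
  refine Finset.sum_congr rfl fun p _ => Finset.sum_congr rfl fun q _ => ?_
  rw [Function.update_self, Function.update_of_ne hij, Function.update_self]; ring

lemma ptraceC_sub [NeZero n] (X Y : NOp n) : ptraceC (X - Y) = ptraceC X - ptraceC Y := by
  ext a b
  simp only [ptraceC, Matrix.of_apply, Matrix.sub_apply]
  rw [← Finset.sum_sub_distrib]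
  exact Finset.sum_congr rfl fun g _ => by split <;> simp

lemma ptraceC_smul [NeZero n] (c : ℂ) (X : NOp n) : ptraceC (c • X) = c • ptraceC X := by
  ext a b
  simp only [ptraceC, Matrix.of_apply, Matrix.smul_apply, smul_eq_mul, Finset.mul_sum]
  exact Finset.sum_congr rfl fun g _ => by split <;> simp

lemma ptraceC_sum [NeZero n] {ι : Type*} (s : Finset ι) (F : ι → NOp n) :
    ptraceC (∑ i ∈ s, F i) = ∑ i ∈ s, ptraceC (F i) := by
  ext a b
  simp only [ptraceC, Matrix.of_apply, Matrix.sum_apply]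
  rw [Finset.sum_comm]
  exact Finset.sum_congr rfl fun g _ => by split <;> simp

/-- Permutation of configurations obtained by acting at one site. -/
def updEquiv (i : Fin n) (σ : Equiv.Perm (Fin 2)) : Equiv.Perm (QState n) where
  toFun g := Function.update g i (σ (g i))
  invFun g := Function.update g i (σ.symm (g i))
  left_inv g := by
    funext l
    by_cases h : l = i
    · subst h; simp
    · simp [Function.update_of_ne h]
  right_inv g := by
    funext l
    by_cases h : l = i
    · subst h; simp
    · simp [Function.update_of_ne h]

lemma sum_split (i : Fin n) (F : QState n → ℂ) :
    ∑ g : QState n, F g = ∑ d, ∑ g : QState n, (if g i = d then F g else 0) := by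
  rw [Finset.sum_comm]
  refine Finset.sum_congr rfl fun g _ => ?_
  rw [Finset.sum_ite_eq Finset.univ (g i) (fun _ => F g), if_pos (Finset.mem_univ _)]

lemma sum_update_reindex (i : Fin n) (b c : Fin 2) (F : QState n → ℂ) :
    ∑ g : QState n, (if g i = b then F (Function.update g i c) else 0)
      = ∑ g : QState n, (if g i = c then F g else 0) := by
  rw [← Equiv.sum_comp (updEquiv i (Equiv.swap b c))
    (fun g : QState n => if g i = b then F (Function.update g i c) else 0)]
  refine Finset.sum_congr rfl fun g _ => ?_
  show (if (Function.update g i (Equiv.swap b c (g i))) i = b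
      then F (Function.update (Function.update g i (Equiv.swap b c (g i))) i c) else 0) = _
  rw [Function.update_self, Function.update_idem]
  simp only [Equiv.apply_eq_iff_eq_symm_apply, Equiv.symm_swap, Equiv.swap_apply_left]
  by_cases h : g i = c
  · rw [if_pos h, if_pos h, ← h, Function.update_eq_self]
  · rw [if_neg h, if_neg h]

lemma sum_update_reindex2 (i : Fin n) (d c : Fin 2) (F : QState n → QState n → ℂ) :
    ∑ g : QState n, (if g i = d then F (Function.update g i c) g else 0)
      = ∑ g : QState n, (if g i = c then F g (Function.update g i d) else 0) := by
  rw [← Equiv.sum_comp (updEquiv i (Equiv.swap d c))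
    (fun g : QState n => if g i = d then F (Function.update g i c) g else 0)]
  refine Finset.sum_congr rfl fun g _ => ?_
  show (if (Function.update g i (Equiv.swap d c (g i))) i = d
      then F (Function.update (Function.update g i (Equiv.swap d c (g i))) i c)
        (Function.update g i (Equiv.swap d c (g i))) else 0) = _
  rw [Function.update_self, Function.update_idem]
  simp only [Equiv.apply_eq_iff_eq_symm_apply, Equiv.symm_swap, Equiv.swap_apply_left]
  by_cases h : g i = c
  · rw [if_pos h, if_pos h, h, Equiv.swap_apply_right, ← h, Function.update_eq_self]
  · rw [if_neg h, if_neg h]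

lemma sum_update_reindex_pair (i j : Fin n) (hij : i ≠ j) (b c p q : Fin 2)
    (F : QState n → QState n → ℂ) :
    ∑ g : QState n, (if g i = b ∧ g j = c
        then F g (Function.update (Function.update g i p) j q) else 0)
      = ∑ g : QState n, (if g i = p ∧ g j = q
        then F (Function.update (Function.update g i b) j c) g else 0) := by
  rw [← Equiv.sum_comp ((updEquiv i (Equiv.swap b p)).trans (updEquiv j (Equiv.swap c q)))
    (fun g : QState n => if g i = b ∧ g j = c
        then F g (Function.update (Function.update g i p) j q) else 0)]
  refine Finset.sum_congr rfl fun g _ => ?_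
  set w := ((updEquiv i (Equiv.swap b p)).trans (updEquiv j (Equiv.swap c q))) g with hw
  have hwdef : w = Function.update (Function.update g i (Equiv.swap b p (g i))) j
      (Equiv.swap c q (g j)) := by
    simp only [hw, Equiv.trans_apply, updEquiv, Equiv.coe_fn_mk]
    rw [Function.update_of_ne hij.symm]
  have hwi : w i = Equiv.swap b p (g i) := by
    rw [hwdef, Function.update_of_ne hij, Function.update_self]
  have hwj : w j = Equiv.swap c q (g j) := by
    rw [hwdef, Function.update_self]
  have hwl : ∀ l, l ≠ i → l ≠ j → w l = g l := by
    intro l h1 h2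
    rw [hwdef, Function.update_of_ne h2, Function.update_of_ne h1]
  by_cases hc : g i = p ∧ g j = q
  · obtain ⟨h1, h2⟩ := hc
    have c1 : w i = b := by rw [hwi, h1, Equiv.swap_apply_right]
    have c2 : w j = c := by rw [hwj, h2, Equiv.swap_apply_right]
    rw [if_pos ⟨c1, c2⟩, if_pos ⟨h1, h2⟩]
    have e1 : w = Function.update (Function.update g i b) j c := by
      funext l
      by_cases hl : l = j
      · subst hl; rw [c2, Function.update_self]
      · rw [Function.update_of_ne hl]
        by_cases hl' : l = i
        · subst hl'; rw [Function.update_self]; exact c1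
        · rw [Function.update_of_ne hl']; exact hwl l hl' hl
    have e2 : Function.update (Function.update w i p) j q = g := by
      funext l
      by_cases hl : l = j
      · subst hl; rw [Function.update_self]; exact h2.symm
      · rw [Function.update_of_ne hl]
        by_cases hl' : l = i
        · subst hl'; rw [Function.update_self]; exact h1.symm
        · rw [Function.update_of_ne hl']; exact hwl l hl' hl
    rw [e2, e1]
  · have hne : ¬ (w i = b ∧ w j = c) := by
      rintro ⟨c1, c2⟩
      apply hc
      constructor
      · rw [hwi] at c1
        exact (Equiv.swap b p).injective (c1.trans (Equiv.swap_apply_right b p).symm)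
      · rw [hwj] at c2
        exact (Equiv.swap c q).injective (c2.trans (Equiv.swap_apply_right c q).symm)
    rw [if_neg hne, if_neg hc]

end Entries
section PTrace
variable {n : ℕ} [NeZero n]

lemma ptraceC_onSite0_mul (A : Op2) (ρ : NOp n) :
    ptraceC (onSite 0 A * ρ) = A * ptraceC ρ := by
  ext a b
  rw [Matrix.mul_apply]
  simp only [ptraceC, Matrix.of_apply]
  have key : ∀ g : QState n,
      (if g 0 = b then (onSite 0 A * ρ : NOp n) (Function.update g 0 a) g else 0)
        = ∑ c, A a c * (if g 0 = b then ρ (Function.update g 0 c) g else 0) := by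
    intro g
    by_cases h : g 0 = b
    · rw [if_pos h, onSite_mul_apply]
      refine Finset.sum_congr rfl fun c _ => ?_
      rw [if_pos h, Function.update_self, Function.update_idem]
    · rw [if_neg h]
      symm
      refine Finset.sum_eq_zero fun c _ => ?_
      rw [if_neg h, mul_zero]
  rw [Finset.sum_congr rfl fun g _ => key g, Finset.sum_comm]
  refine Finset.sum_congr rfl fun c _ => ?_
  rw [← Finset.mul_sum]

lemma ptraceC_mul_onSite0 (A : Op2) (ρ : NOp n) :
    ptraceC (ρ * onSite 0 A) = ptraceC ρ * A := by
  ext a b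
  rw [Matrix.mul_apply]
  simp only [ptraceC, Matrix.of_apply]
  have key : ∀ g : QState n,
      (if g 0 = b then (ρ * onSite 0 A : NOp n) (Function.update g 0 a) g else 0)
        = ∑ c, (if g 0 = b
            then ρ (Function.update g 0 a) (Function.update g 0 c) * A c b else 0) := by
    intro g
    by_cases h : g 0 = b
    · rw [if_pos h, mul_onSite_apply, h]
      exact Finset.sum_congr rfl fun c _ => (if_pos rfl).symm
    · rw [if_neg h]
      symm
      exact Finset.sum_eq_zero fun c _ => if_neg h
  rw [Finset.sum_congr rfl fun g _ => key g, Finset.sum_comm]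
  refine Finset.sum_congr rfl fun c _ => ?_
  rw [Finset.sum_mul]
  simp only [ite_mul, zero_mul]
  rw [← sum_update_reindex 0 b c (fun h => ρ (Function.update h 0 a) h * A c b)]
  refine Finset.sum_congr rfl fun g _ => ?_
  by_cases h : g 0 = b
  · rw [if_pos h, if_pos h, Function.update_idem]
  · rw [if_neg h, if_neg h]

lemma ptraceC_onSite_comm (i : Fin n) (hi : i ≠ 0) (A : Op2) (ρ : NOp n) :
    ptraceC (onSite i A * ρ) = ptraceC (ρ * onSite i A) := by
  have h0i : (0 : Fin n) ≠ i := Ne.symm hi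
  ext a b
  simp only [ptraceC, Matrix.of_apply]
  have keyL : ∀ g : QState n,
      (if g 0 = b then (onSite i A * ρ : NOp n) (Function.update g 0 a) g else 0)
        = ∑ c, ∑ d, (if g i = d then (if g 0 = b
            then A d c * ρ (Function.update (Function.update g i c) 0 a) g else 0) else 0) := by
    intro g
    by_cases h : g 0 = b
    · rw [if_pos h, onSite_mul_apply]
      refine Finset.sum_congr rfl fun c _ => ?_
      rw [Finset.sum_ite_eq Finset.univ (g i)
        (fun d => if g 0 = b then A d c * ρ (Function.update (Function.update g i c) 0 a) g else 0),
        if_pos (Finset.mem_univ _), if_pos h, Function.update_of_ne hi,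
        Function.update_comm h0i]
    · rw [if_neg h]
      symm
      refine Finset.sum_eq_zero fun c _ => Finset.sum_eq_zero fun d _ => ?_
      simp [h]
  have keyR : ∀ g : QState n,
      (if g 0 = b then (ρ * onSite i A : NOp n) (Function.update g 0 a) g else 0)
        = ∑ c, ∑ d, (if g i = c then (if g 0 = b
            then A d c * ρ (Function.update g 0 a) (Function.update g i d) else 0) else 0) := by
    intro g
    by_cases h : g 0 = b
    · rw [if_pos h, mul_onSite_apply]
      rw [Finset.sum_comm]
      refine Finset.sum_congr rfl fun d _ => ?_
      rw [Finset.sum_ite_eq Finset.univ (g i)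
        (fun c => if g 0 = b then A d c * ρ (Function.update g 0 a) (Function.update g i d) else 0),
        if_pos (Finset.mem_univ _), if_pos h, mul_comm]
    · rw [if_neg h]
      symm
      refine Finset.sum_eq_zero fun c _ => Finset.sum_eq_zero fun d _ => ?_
      simp [h]
  rw [Finset.sum_congr rfl fun g _ => keyL g, Finset.sum_comm]
  conv_rhs => rw [Finset.sum_congr rfl fun g _ => keyR g, Finset.sum_comm]
  refine Finset.sum_congr rfl fun c _ => ?_
  rw [Finset.sum_comm]
  conv_rhs => rw [Finset.sum_comm]
  refine Finset.sum_congr rfl fun d _ => ?_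
  rw [sum_update_reindex2 i d c
    (fun z w => if w 0 = b then A d c * ρ (Function.update z 0 a) w else 0)]
  refine Finset.sum_congr rfl fun g _ => ?_
  rw [Function.update_of_ne h0i]
lemma ptraceC_onPair_mul (h01 : (0 : Fin n) ≠ 1) (M : Op4) (ρ : NOp n) :
    ptraceC (onPair 0 1 M * ρ) = ptrace2 (M * ptrace01 ρ) := by
  ext a b
  simp only [ptraceC, ptrace2, ptrace01, Matrix.of_apply]
  have keyL : ∀ g : QState n,
      (if g 0 = b then (onPair 0 1 M * ρ : NOp n) (Function.update g 0 a) g else 0)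
        = ∑ c, ∑ p, ∑ q, (if g 1 = c then (if g 0 = b
            then M (a, c) (p, q) * ρ (Function.update (Function.update g 0 p) 1 q) g
            else 0) else 0) := by
    intro g
    by_cases h : g 0 = b
    · rw [if_pos h, onPair_mul_apply 0 1 h01]
      conv_rhs => rw [Finset.sum_comm]
      refine Finset.sum_congr rfl fun p _ => ?_
      conv_rhs => rw [Finset.sum_comm]
      refine Finset.sum_congr rfl fun q _ => ?_
      rw [Finset.sum_ite_eq Finset.univ (g 1)
        (fun c => if g 0 = b
          then M (a, c) (p, q) * ρ (Function.update (Function.update g 0 p) 1 q) g else 0),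
        if_pos (Finset.mem_univ _), if_pos h, Function.update_self,
        Function.update_of_ne (Ne.symm h01), Function.update_idem]
    · rw [if_neg h]
      symm
      refine Finset.sum_eq_zero fun c _ => Finset.sum_eq_zero fun p _ =>
        Finset.sum_eq_zero fun q _ => ?_
      simp [h]
  have keyR : ∀ c : Fin 2,
      (∑ r : Fin 2 × Fin 2, M (a, c) r * ∑ g : QState n,
          (if g 0 = b ∧ g 1 = c
            then ρ (Function.update (Function.update g 0 r.1) 1 r.2) g else 0))
        = ∑ p, ∑ q, ∑ g : QState n, (if g 1 = c then (if g 0 = b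
            then M (a, c) (p, q) * ρ (Function.update (Function.update g 0 p) 1 q) g
            else 0) else 0) := by
    intro c
    rw [Fintype.sum_prod_type]
    refine Finset.sum_congr rfl fun p _ => Finset.sum_congr rfl fun q _ => ?_
    rw [Finset.mul_sum]
    refine Finset.sum_congr rfl fun g _ => ?_
    by_cases h1 : g 0 = b <;> by_cases h2 : g 1 = c <;> simp [h1, h2]
  calc (∑ g : QState n, if g 0 = b then (onPair 0 1 M * ρ : NOp n) (Function.update g 0 a) g else 0)
      = ∑ c : Fin 2, ∑ p, ∑ q, ∑ g : QState n, (if g 1 = c then (if g 0 = b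
            then M (a, c) (p, q) * ρ (Function.update (Function.update g 0 p) 1 q) g
            else 0) else 0) := by
        rw [Finset.sum_congr rfl fun g _ => keyL g, Finset.sum_comm]
        refine Finset.sum_congr rfl fun c _ => ?_
        rw [Finset.sum_comm]
        refine Finset.sum_congr rfl fun p _ => ?_
        rw [Finset.sum_comm]
    _ = _ := by
        refine Finset.sum_congr rfl fun c _ => ?_
        rw [Matrix.mul_apply]
        simp only [Matrix.of_apply]
        rw [← keyR c]

lemma ptraceC_mul_onPair (h01 : (0 : Fin n) ≠ 1) (M : Op4) (ρ : NOp n) :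
    ptraceC (ρ * onPair 0 1 M) = ptrace2 (ptrace01 ρ * M) := by
  ext a b
  simp only [ptraceC, ptrace2, ptrace01, Matrix.of_apply]
  have keyL : ∀ g : QState n,
      (if g 0 = b then (ρ * onPair 0 1 M : NOp n) (Function.update g 0 a) g else 0)
        = ∑ c, ∑ p, ∑ q, (if g 0 = b ∧ g 1 = c
            then ρ (Function.update g 0 a) (Function.update (Function.update g 0 p) 1 q)
              * M (p, q) (b, c) else 0) := by
    intro g
    by_cases h : g 0 = b
    · rw [if_pos h, mul_onPair_apply 0 1 h01]
      conv_rhs => rw [Finset.sum_comm]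
      refine Finset.sum_congr rfl fun p _ => ?_
      conv_rhs => rw [Finset.sum_comm]
      refine Finset.sum_congr rfl fun q _ => ?_
      rw [Finset.sum_congr rfl fun c _ =>
        if_congr (and_iff_right h) rfl rfl]
      rw [Finset.sum_ite_eq Finset.univ (g 1)
        (fun c => ρ (Function.update g 0 a) (Function.update (Function.update g 0 p) 1 q)
          * M (p, q) (b, c)),
        if_pos (Finset.mem_univ _), h]
    · rw [if_neg h]
      symm
      refine Finset.sum_eq_zero fun c _ => Finset.sum_eq_zero fun p _ =>
        Finset.sum_eq_zero fun q _ => ?_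
      simp [h]
  have keyR : ∀ c : Fin 2,
      (∑ r : Fin 2 × Fin 2, (∑ g : QState n,
          (if g 0 = r.1 ∧ g 1 = r.2
            then ρ (Function.update (Function.update g 0 a) 1 c) g else 0)) * M r (b, c))
        = ∑ p, ∑ q, ∑ g : QState n, (if g 0 = p ∧ g 1 = q
            then ρ (Function.update (Function.update g 0 a) 1 c) g * M (p, q) (b, c) else 0) := by
    intro c
    rw [Fintype.sum_prod_type]
    refine Finset.sum_congr rfl fun p _ => Finset.sum_congr rfl fun q _ => ?_
    rw [Finset.sum_mul]
    refine Finset.sum_congr rfl fun g _ => ?_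
    by_cases h1 : g 0 = p <;> by_cases h2 : g 1 = q <;> simp [h1, h2]
  calc (∑ g : QState n, if g 0 = b then (ρ * onPair 0 1 M : NOp n) (Function.update g 0 a) g else 0)
      = ∑ c : Fin 2, ∑ p, ∑ q, ∑ g : QState n, (if g 0 = p ∧ g 1 = q
            then ρ (Function.update (Function.update g 0 a) 1 c) g * M (p, q) (b, c) else 0) := by
        rw [Finset.sum_congr rfl fun g _ => keyL g, Finset.sum_comm]
        refine Finset.sum_congr rfl fun c _ => ?_
        rw [Finset.sum_comm]
        refine Finset.sum_congr rfl fun p _ => ?_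
        rw [Finset.sum_comm]
        refine Finset.sum_congr rfl fun q _ => ?_
        rw [sum_update_reindex_pair 0 1 h01 b c p q
          (fun z w => ρ (Function.update z 0 a) w * M (p, q) (b, c))]
        refine Finset.sum_congr rfl fun g _ => ?_
        split
        · rw [Function.update_comm (Ne.symm h01), Function.update_idem]
        · rfl
    _ = _ := by
        refine Finset.sum_congr rfl fun c _ => ?_
        rw [Matrix.mul_apply]
        simp only [Matrix.of_apply]
        rw [← keyR c]
end PTrace
section Swap
variable {n : ℕ}

lemma comp_swap_eq_iff {i j : Fin n} {x w : QState n} :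
    x = w ∘ Equiv.swap i j ↔ w = x ∘ Equiv.swap i j := by
  constructor
  · intro h; subst h; funext l
    simp [Function.comp_apply, Equiv.swap_apply_self]
  · intro h; subst h; funext l
    simp [Function.comp_apply, Equiv.swap_apply_self]

lemma swapOp_mul_apply (i j : Fin n) (X : NOp n) (x y : QState n) :
    (swapOp n i j * X : NOp n) x y = X (x ∘ Equiv.swap i j) y := by
  rw [Matrix.mul_apply]
  simp only [swapOp, Matrix.of_apply]
  have step : ∀ w : QState n,
      (if x = w ∘ Equiv.swap i j then (1:ℂ) else 0) * X w y
        = if w = x ∘ Equiv.swap i j then X w y else 0 := by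
    intro w
    rw [if_congr (comp_swap_eq_iff) rfl rfl]
    split <;> simp
  rw [Finset.sum_congr rfl fun w _ => step w,
    Finset.sum_ite_eq' Finset.univ (x ∘ Equiv.swap i j) (fun w => X w y),
    if_pos (Finset.mem_univ _)]

lemma mul_swapOp_apply (i j : Fin n) (X : NOp n) (x y : QState n) :
    (X * swapOp n i j : NOp n) x y = X x (y ∘ Equiv.swap i j) := by
  rw [Matrix.mul_apply]
  simp only [swapOp, Matrix.of_apply]
  have step : ∀ w : QState n,
      X x w * (if w = y ∘ Equiv.swap i j then (1:ℂ) else 0)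
        = if w = y ∘ Equiv.swap i j then X x w else 0 := by
    intro w; split <;> simp
  rw [Finset.sum_congr rfl fun w _ => step w,
    Finset.sum_ite_eq' Finset.univ (y ∘ Equiv.swap i j) (fun w => X x w),
    if_pos (Finset.mem_univ _)]

lemma swap_conj_apply (i j : Fin n) (X : NOp n) (x y : QState n) :
    (swapOp n i j * X * swapOp n i j : NOp n) x y
      = X (x ∘ Equiv.swap i j) (y ∘ Equiv.swap i j) := by
  rw [mul_swapOp_apply, swapOp_mul_apply]

lemma comp_swap_inj {i j : Fin n} {x y : QState n}
    (h : x ∘ Equiv.swap i j = y ∘ Equiv.swap i j) : x = y := by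
  funext l
  have := congrFun h (Equiv.swap i j l)
  simpa [Function.comp_apply, Equiv.swap_apply_self] using this

lemma swapOp_mul_self (i j : Fin n) : swapOp n i j * swapOp n i j = (1 : NOp n) := by
  ext x y
  rw [swapOp_mul_apply]
  simp only [swapOp, Matrix.of_apply, Matrix.one_apply]
  by_cases h : x = y
  · subst h; rw [if_pos rfl, if_pos rfl]
  · rw [if_neg (fun hc : x ∘ Equiv.swap i j = y ∘ Equiv.swap i j =>
      h (comp_swap_inj hc)), if_neg h]
lemma swapOp_conjTranspose (i j : Fin n) : (swapOp n i j)ᴴ = swapOp n i j := by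
  ext x y
  simp only [Matrix.conjTranspose_apply, swapOp, Matrix.of_apply]
  rw [if_congr (comp_swap_eq_iff (i := i) (j := j) (x := y) (w := x)) rfl rfl]
  split <;> simp

lemma prod_erase_comp (e : Equiv.Perm (Fin n)) (k : Fin n) (f : Fin n → ℂ) :
    ∏ l ∈ Finset.univ.erase k, f (e l) = ∏ l ∈ Finset.univ.erase (e k), f l := by
  refine Finset.prod_nbij' e e.symm ?_ ?_ ?_ ?_ ?_
  · intro a ha
    exact Finset.mem_erase.mpr ⟨fun hc => (Finset.mem_erase.mp ha).1 (e.injective hc),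
      Finset.mem_univ _⟩
  · intro b hb
    refine Finset.mem_erase.mpr ⟨fun hc => (Finset.mem_erase.mp hb).1 ?_, Finset.mem_univ _⟩
    rw [← hc]; simp
  · intro a _; simp
  · intro a _; simp
  · intro a _; rfl

lemma prod_erase2_comp (e : Equiv.Perm (Fin n)) (k k' : Fin n) (f : Fin n → ℂ) :
    ∏ l ∈ (Finset.univ.erase k).erase k', f (e l)
      = ∏ l ∈ (Finset.univ.erase (e k)).erase (e k'), f l := by
  refine Finset.prod_nbij' e e.symm ?_ ?_ ?_ ?_ ?_
  · intro a ha
    have h1 := (Finset.mem_erase.mp ha).1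
    have h2 := (Finset.mem_erase.mp (Finset.mem_erase.mp ha).2).1
    exact Finset.mem_erase.mpr ⟨fun hc => h1 (e.injective hc),
      Finset.mem_erase.mpr ⟨fun hc => h2 (e.injective hc), Finset.mem_univ _⟩⟩
  · intro b hb
    have h1 := (Finset.mem_erase.mp hb).1
    have h2 := (Finset.mem_erase.mp (Finset.mem_erase.mp hb).2).1
    refine Finset.mem_erase.mpr ⟨fun hc => h1 ?_,
      Finset.mem_erase.mpr ⟨fun hc => h2 ?_, Finset.mem_univ _⟩⟩
    · rw [← hc]; simp
    · rw [← hc]; simp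
  · intro a _; simp
  · intro a _; simp
  · intro a _; rfl

lemma swap_conj_onSite (i j : Fin n) (k : Fin n) (A : Op2) :
    swapOp n i j * onSite k A * swapOp n i j = onSite (Equiv.swap i j k) A := by
  ext x y
  rw [swap_conj_apply]
  simp only [onSite, Matrix.of_apply, Function.comp_apply]
  rw [prod_erase_comp (Equiv.swap i j) k
    (fun l => if x l = y l then (1:ℂ) else 0)]

lemma swap_conj_onPair (i j : Fin n) (k k' : Fin n) (M : Op4) :
    swapOp n i j * onPair k k' M * swapOp n i j
      = onPair (Equiv.swap i j k) (Equiv.swap i j k') M := by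
  ext x y
  rw [swap_conj_apply]
  simp only [onPair, Matrix.of_apply, Function.comp_apply]
  rw [prod_erase2_comp (Equiv.swap i j) k k'
    (fun l => if x l = y l then (1:ℂ) else 0)]

lemma swap_conj_prodState (i j : Fin n) (φ : Fin 2 → ℂ) :
    swapOp n i j * prodState n φ * swapOp n i j = prodState n φ := by
  ext x y
  rw [swap_conj_apply]
  simp only [prodState, Matrix.of_apply, prodVec, Function.comp_apply]
  rw [Equiv.prod_comp (Equiv.swap i j) (fun l => φ (x l)),
    Equiv.prod_comp (Equiv.swap i j) (fun l => φ (y l))]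

lemma ptraceC_swap_conj [NeZero n] (i j : Fin n) (hi : i ≠ 0) (hj : j ≠ 0) (X : NOp n) :
    ptraceC (swapOp n i j * X * swapOp n i j) = ptraceC X := by
  have he0 : Equiv.swap i j 0 = 0 :=
    Equiv.swap_apply_of_ne_of_ne (Ne.symm hi) (Ne.symm hj)
  ext a b
  simp only [ptraceC, Matrix.of_apply]
  have key : ∀ g : QState n,
      (if g 0 = b then (swapOp n i j * X * swapOp n i j : NOp n) (Function.update g 0 a) g else 0)
        = (if g 0 = b then X (Function.update g 0 a ∘ Equiv.swap i j) (g ∘ Equiv.swap i j)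
            else 0) := by
    intro g; split
    · rw [swap_conj_apply]
    · rfl
  rw [Finset.sum_congr rfl fun g _ => key g]
  have inv : Function.Involutive (fun g : QState n => g ∘ Equiv.swap i j) := by
    intro g; funext l; simp [Function.comp_apply, Equiv.swap_apply_self]
  rw [← Equiv.sum_comp inv.toPerm
    (fun g : QState n => if g 0 = b then
      X (Function.update g 0 a ∘ Equiv.swap i j) (g ∘ Equiv.swap i j) else 0)]
  refine Finset.sum_congr rfl fun g _ => ?_
  show (if (g ∘ Equiv.swap i j) 0 = b then
      X (Function.update (g ∘ Equiv.swap i j) 0 a ∘ Equiv.swap i j)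
        ((g ∘ Equiv.swap i j) ∘ Equiv.swap i j) else 0) = _
  have h1 : (g ∘ Equiv.swap i j) 0 = g 0 := by
    simp [Function.comp_apply, he0]
  have h2 : (g ∘ Equiv.swap i j) ∘ Equiv.swap i j = g := inv g
  have h3 : Function.update (g ∘ Equiv.swap i j) 0 a ∘ Equiv.swap i j
      = Function.update g 0 a := by
    funext l
    by_cases hl : l = 0
    · subst hl
      rw [Function.comp_apply, he0, Function.update_self, Function.update_self]
    · have hel : Equiv.swap i j l ≠ 0 := by
        intro hc
        apply hl
        have := congrArg (Equiv.swap i j) hc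
        rwa [Equiv.swap_apply_self, he0] at this
      rw [Function.comp_apply, Function.update_of_ne hel, Function.update_of_ne hl,
        Function.comp_apply, Equiv.swap_apply_self]
  rw [h1, h2, h3]
end Swap
section Herm
variable {n : ℕ}

lemma onSite_conjTranspose (i : Fin n) (A : Op2) : (onSite i A)ᴴ = onSite i Aᴴ := by
  ext x y
  rw [Matrix.conjTranspose_apply]
  simp only [onSite, Matrix.of_apply]
  have h1 : star (A (y i) (x i)) = Aᴴ (x i) (y i) := rfl
  have h2 : star (∏ j ∈ Finset.univ.erase i, if y j = x j then (1:ℂ) else 0)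
      = ∏ j ∈ Finset.univ.erase i, if x j = y j then (1:ℂ) else 0 := by
    rw [star_prod]
    refine Finset.prod_congr rfl fun j _ => ?_
    by_cases h : x j = y j
    · rw [if_pos h.symm, if_pos h, star_one]
    · rw [if_neg (fun hc => h hc.symm), if_neg h, star_zero]
  rw [star_mul', h1, h2]

lemma onPair_conjTranspose (i j : Fin n) (M : Op4) : (onPair i j M)ᴴ = onPair i j Mᴴ := by
  ext x y
  rw [Matrix.conjTranspose_apply]
  simp only [onPair, Matrix.of_apply]
  have h1 : star (M (y i, y j) (x i, x j)) = Mᴴ (x i, x j) (y i, y j) := rfl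
  have h2 : star (∏ l ∈ (Finset.univ.erase i).erase j, if y l = x l then (1:ℂ) else 0)
      = ∏ l ∈ (Finset.univ.erase i).erase j, if x l = y l then (1:ℂ) else 0 := by
    rw [star_prod]
    refine Finset.prod_congr rfl fun l _ => ?_
    by_cases h : x l = y l
    · rw [if_pos h.symm, if_pos h, star_one]
    · rw [if_neg (fun hc => h hc.symm), if_neg h, star_zero]
  rw [star_mul', h1, h2]

lemma kron_conjTranspose (A B : Op2) : (A ⊗ₖ B)ᴴ = Aᴴ ⊗ₖ Bᴴ := by
  ext p q
  simp only [Matrix.conjTranspose_apply, Matrix.kroneckerMap_apply, star_mul']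

lemma pauli_conjTranspose (μ : Fin 3) : (pauli μ)ᴴ = pauli μ := by
  fin_cases μ <;>
    · ext a b
      fin_cases a <;> fin_cases b <;>
        simp [pauli, Matrix.conjTranspose_apply, Complex.star_def, Complex.conj_I]

lemma Vint_conjTranspose (V : Fin 3 → ℝ) : (Vint V)ᴴ = Vint V := by
  unfold Vint
  rw [Matrix.conjTranspose_sum]
  refine Finset.sum_congr rfl fun μ _ => ?_
  rw [Matrix.conjTranspose_smul, kron_conjTranspose, pauli_conjTranspose]
  congr 1
  simp [Complex.star_def, Complex.conj_ofReal]

lemma centralH_conjTranspose [NeZero n] (H0 : Op2) (hH0 : H0ᴴ = H0) (V : Fin 3 → ℝ) :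
    (centralH n H0 V)ᴴ = centralH n H0 V := by
  unfold centralH
  rw [Matrix.conjTranspose_add, Matrix.conjTranspose_sum, Matrix.conjTranspose_smul,
    Matrix.conjTranspose_sum]
  congr 1
  · exact Finset.sum_congr rfl fun i _ => by rw [onSite_conjTranspose, hH0]
  · have hs : ∀ i ∈ Finset.univ.erase (0 : Fin n),
        (onPair 0 i (Vint V))ᴴ = onPair 0 i (Vint V) := fun i _ => by
      rw [onPair_conjTranspose, Vint_conjTranspose]
    rw [Finset.sum_congr rfl hs]
    congr 1
    simp

lemma swap_conj_centralH [NeZero n] (i j : Fin n) (hi : i ≠ 0) (hj : j ≠ 0)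
    (H0 : Op2) (V : Fin 3 → ℝ) :
    swapOp n i j * centralH n H0 V * swapOp n i j = centralH n H0 V := by
  have he0 : Equiv.swap i j 0 = 0 := Equiv.swap_apply_of_ne_of_ne (Ne.symm hi) (Ne.symm hj)
  have hswap0 : ∀ k : Fin n, Equiv.swap i j k = 0 → k = 0 := by
    intro k h
    have := congrArg (Equiv.swap i j) h
    rwa [Equiv.swap_apply_self, he0] at this
  unfold centralH
  rw [Matrix.mul_add, Matrix.add_mul]
  congr 1
  · rw [Finset.mul_sum, Finset.sum_mul]
    rw [Finset.sum_congr rfl fun k _ => swap_conj_onSite i j k H0]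
    exact Equiv.sum_comp (Equiv.swap i j) (fun k => onSite k H0)
  · rw [Matrix.mul_smul, Matrix.smul_mul]
    congr 1
    rw [Finset.mul_sum, Finset.sum_mul]
    rw [Finset.sum_congr rfl fun k _ =>
      (swap_conj_onPair i j 0 k (Vint V)).trans (by rw [he0])]
    refine Finset.sum_nbij' (fun k => Equiv.swap i j k) (fun k => Equiv.swap i j k)
      ?_ ?_ ?_ ?_ ?_
    · intro k hk
      exact Finset.mem_erase.mpr ⟨fun hc => (Finset.mem_erase.mp hk).1 (hswap0 k hc),
        Finset.mem_univ _⟩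
    · intro k hk
      exact Finset.mem_erase.mpr ⟨fun hc => (Finset.mem_erase.mp hk).1 (hswap0 k hc),
        Finset.mem_univ _⟩
    · intro k _; simp [Equiv.swap_apply_self]
    · intro k _; simp [Equiv.swap_apply_self]
    · intro k _; rfl

lemma ptraceC_prodState [NeZero n] (φ : Fin 2 → ℂ)
    (hφ : ∑ a, Complex.normSq (φ a) = 1) : ptraceC (prodState n φ) = proj φ := by
  ext a b
  simp only [ptraceC, prodState, proj, Matrix.of_apply, prodVec]
  set w : Fin 2 → ℂ := fun c => φ c * (starRingEnd ℂ) (φ c) with hw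
  set v : Fin n → Fin 2 → ℂ := fun l c => if l = 0 then (if c = b then 1 else 0) else w c with hv
  have key : ∀ g : QState n,
      (if g 0 = b then (∏ l, φ (Function.update g 0 a l)) * (starRingEnd ℂ) (∏ l, φ (g l))
        else 0) = (φ a * (starRingEnd ℂ) (φ b)) * ∏ l, v l (g l) := by
    intro g
    have e1 : (∏ l, φ (Function.update g 0 a l))
        = φ a * ∏ l ∈ Finset.univ.erase 0, φ (g l) := by
      rw [← Finset.mul_prod_erase Finset.univ (fun l => φ (Function.update g 0 a l))
        (Finset.mem_univ 0), Function.update_self]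
      congr 1
      exact Finset.prod_congr rfl fun l hl =>
        by rw [Function.update_of_ne (Finset.mem_erase.mp hl).1]
    have e2 : ((starRingEnd ℂ) (∏ l, φ (g l)))
        = (starRingEnd ℂ) (φ (g 0))
          * ∏ l ∈ Finset.univ.erase 0, (starRingEnd ℂ) (φ (g l)) := by
      rw [← Finset.mul_prod_erase Finset.univ (fun l => φ (g l)) (Finset.mem_univ 0),
        RingHom.map_mul, _root_.map_prod]
    have e3 : (∏ l, v l (g l))
        = (if g 0 = b then (1:ℂ) else 0) * ∏ l ∈ Finset.univ.erase 0, w (g l) := by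
      rw [← Finset.mul_prod_erase Finset.univ (fun l => v l (g l)) (Finset.mem_univ 0),
        Finset.prod_congr rfl (fun l hl =>
          (if_neg (Finset.mem_erase.mp hl).1 : v l (g l) = w (g l)))]
      congr 1
    rw [e1, e2, e3]
    by_cases h : g 0 = b
    · have hwprod : (∏ l ∈ Finset.univ.erase (0 : Fin n), w (g l))
          = (∏ l ∈ Finset.univ.erase 0, φ (g l))
            * ∏ l ∈ Finset.univ.erase 0, (starRingEnd ℂ) (φ (g l)) := by
        simp only [hw]
        exact Finset.prod_mul_distrib
      rw [if_pos h, if_pos h, h, hwprod]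
      ring
    · rw [if_neg h, if_neg h]
      ring
  rw [Finset.sum_congr rfl fun g _ => key g, ← Finset.mul_sum]
  have hsum : ∑ g : QState n, ∏ l, v l (g l) = 1 := by
    have hps := Finset.prod_univ_sum (fun _ : Fin n => (Finset.univ : Finset (Fin 2)))
      (fun l c => v l c)
    rw [Fintype.piFinset_univ] at hps
    rw [← hps]
    have hv0 : ∀ l : Fin n, (∑ c, v l c) = 1 := by
      intro l
      by_cases hl : l = 0
      · subst hl
        simp [hv]
      · simp only [hv, if_neg hl, hw]
        have hc : ∀ c : Fin 2, φ c * (starRingEnd ℂ) (φ c) = (Complex.normSq (φ c) : ℂ) := by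
          intro c; rw [Complex.mul_conj]
        rw [Finset.sum_congr rfl fun c _ => hc c, ← Complex.ofReal_sum, hφ,
          Complex.ofReal_one]
    rw [Finset.prod_congr rfl fun l _ => hv0 l, Finset.prod_const_one]
  rw [hsum, mul_one]

end Herm
lemma ptrace2_sub (X Y : Op4) : ptrace2 (X - Y) = ptrace2 X - ptrace2 Y := by
  ext a b
  simp only [ptrace2, Matrix.of_apply, Matrix.sub_apply]
  rw [Finset.sum_sub_distrib]

lemma MCont.const {m m' : Type*} (A : Matrix m m' ℂ) : MCont (fun _ : ℝ => A) :=
  fun _ _ => continuous_const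

lemma conj_unitary_id {m : Type*} [Fintype m] [DecidableEq m] {U : Matrix m m ℂ}
    (h : U * Uᴴ = 1) (X : Matrix m m ℂ) : U * (Uᴴ * X * U) * Uᴴ = X := by
  rw [← Matrix.mul_assoc U (Uᴴ * X) U, ← Matrix.mul_assoc U Uᴴ X, h, Matrix.one_mul,
    Matrix.mul_assoc X U Uᴴ, h, Matrix.mul_one]

lemma ptraceC_add {n : ℕ} [NeZero n] (X Y : NOp n) :
    ptraceC (X + Y) = ptraceC X + ptraceC Y := by
  ext a b
  simp only [ptraceC, Matrix.of_apply, Matrix.add_apply]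
  rw [← Finset.sum_add_distrib]
  exact Finset.sum_congr rfl fun g _ => by split <;> simp

lemma deriv_alg_rho {m : Type*} [Fintype m] (h uu p w : Matrix m m ℂ) :
    ((-Complex.I) • (h * uu) * p + uu * 0) * w + (uu * p) * (Complex.I • (w * h))
      = (-Complex.I) • (h * (uu * p * w) - (uu * p * w) * h) := by
  simp only [Matrix.mul_zero, add_zero, Matrix.smul_mul, Matrix.mul_smul, smul_sub,
    neg_smul, sub_neg_eq_add, Matrix.neg_mul, Matrix.mul_neg, Matrix.mul_assoc]

lemma deriv_alg_h (w rc h0 k uu : Matrix (Fin 2) (Fin 2) ℂ) :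
    (Complex.I • (w * h0) * rc + w * ((-Complex.I) • (h0 * rc - rc * h0 + k))) * uu
      + (w * rc) * ((-Complex.I) • (h0 * uu)) = w * ((-Complex.I) • k) * uu := by
  simp only [Matrix.smul_mul, Matrix.mul_smul, Matrix.mul_sub, Matrix.sub_mul,
    Matrix.mul_add, Matrix.add_mul, smul_sub, smul_add, neg_smul, sub_neg_eq_add,
    Matrix.neg_mul, Matrix.mul_neg, Matrix.mul_assoc]
  abel

lemma mul3_apply (A M B : Op2) (a b : Fin 2) :
    (A * M * B) a b = ∑ j, ∑ k, A a k * M k j * B j b := by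
  rw [Matrix.mul_apply]
  refine Finset.sum_congr rfl fun j _ => ?_
  rw [Matrix.mul_apply, Finset.sum_mul]
theorem statement6
    (n : ℕ) [NeZero n] (hn : 2 ≤ n)
    (H0 : ℝ → Op2) (hH0 : ∀ t, (H0 t).IsHermitian)
    (V : Fin 3 → ℝ → ℝ) (hVcont : ∀ μ, Continuous (V μ))
    (U : ℝ → NOp n) (hU0 : U 0 = 1)
    (hU : ∀ t x y, HasDerivAt (fun s => U s x y)
      (((-Complex.I) • (centralH n (H0 t) (fun μ => V μ t) * U t)) x y) t)
    (u : ℝ → Op2) (hu0 : u 0 = 1)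
    (hu : ∀ t a b, HasDerivAt (fun s => u s a b) (((-Complex.I) • (H0 t * u t)) a b) t)
    (φ : Fin 2 → ℂ) (hφ : ∑ a, Complex.normSq (φ a) = 1)
    :
    ∀ t : ℝ, 0 ≤ t → ∀ a b : Fin 2,
      ptraceC (U t * prodState n φ * (U t)ᴴ) a b
        = (u t * proj φ * (u t)ᴴ) a b
          + ∫ τ in (0:ℝ)..t,
              (((-Complex.I) • ((u t * (u τ)ᴴ) *
                ptrace2 (matComm (Vint fun μ => V μ τ)
                  (ptrace01 (U τ * prodState n φ * (U τ)ᴴ))) *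
                (u t * (u τ)ᴴ)ᴴ)) a b) := by
  have h01 : (0 : Fin n) ≠ 1 := by
    intro h
    have h2 := congrArg Fin.val h
    have h3 : (1 : Fin n).val = 1 % n := rfl
    rw [Fin.val_zero, h3, Nat.mod_eq_of_lt (by omega : 1 < n)] at h2
    omega
  have h10 : (1 : Fin n) ≠ 0 := Ne.symm h01
  set H : ℝ → NOp n := fun s => centralH n (H0 s) (fun μ => V μ s) with hHdef
  have hHerm : ∀ s, (H s)ᴴ = H s := fun s =>
    centralH_conjTranspose (H0 s) (hH0 s) (fun μ => V μ s)
  have hH0' : ∀ s, (H0 s)ᴴ = H0 s := fun s => hH0 s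
  have hU' : ∀ s, MDeriv U ((-Complex.I) • (H s * U s)) s := fun s x y => hU s x y
  have hu' : ∀ s, MDeriv u ((-Complex.I) • (H0 s * u s)) s := fun s a b => hu s a b
  have hstarI : star (-Complex.I) = Complex.I := by simp
  have hUH' : ∀ s, MDeriv (fun τ => (U τ)ᴴ) (Complex.I • ((U s)ᴴ * H s)) s := by
    intro s
    refine ((hU' s).conjTranspose).congr_deriv ?_
    rw [Matrix.conjTranspose_smul, Matrix.conjTranspose_mul, hHerm, hstarI]
  have huH' : ∀ s, MDeriv (fun τ => (u τ)ᴴ) (Complex.I • ((u s)ᴴ * H0 s)) s := by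
    intro s
    refine ((hu' s).conjTranspose).congr_deriv ?_
    rw [Matrix.conjTranspose_smul, Matrix.conjTranspose_mul, hH0', hstarI]
  -- unitarity of U and u
  have hUunit : ∀ s, (U s)ᴴ * U s = 1 := by
    have hder : ∀ s, MDeriv (fun τ => (U τ)ᴴ * U τ) 0 s := by
      intro s
      refine ((hUH' s).mul (hU' s)).congr_deriv ?_
      rw [Matrix.smul_mul, Matrix.mul_smul, Matrix.mul_assoc, neg_smul]
      exact add_neg_cancel _
    intro s
    have := MDeriv.eq_const hder s
    rw [this, hU0]
    simp
  have hUunit' : ∀ s, U s * (U s)ᴴ = 1 := fun s => mul_eq_one_comm.mp (hUunit s)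
  have huunit : ∀ s, (u s)ᴴ * u s = 1 := by
    have hder : ∀ s, MDeriv (fun τ => (u τ)ᴴ * u τ) 0 s := by
      intro s
      refine ((huH' s).mul (hu' s)).congr_deriv ?_
      rw [Matrix.smul_mul, Matrix.mul_smul, Matrix.mul_assoc, neg_smul]
      exact add_neg_cancel _
    intro s
    have := MDeriv.eq_const hder s
    rw [this, hu0]
    simp
  have huunit' : ∀ s, u s * (u s)ᴴ = 1 := fun s => mul_eq_one_comm.mp (huunit s)
  set P : NOp n := prodState n φ with hPdef
  set ρ : ℝ → NOp n := fun s => U s * P * (U s)ᴴ with hρdef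
  have hρswap : ∀ i : Fin n, i ≠ 0 → i ≠ 1 → ∀ s,
      swapOp n 1 i * ρ s * swapOp n 1 i = ρ s := by
    intro i hi0 hi1 s
    set C : NOp n := swapOp n 1 i with hCdef
    have hCC : C * C = 1 := swapOp_mul_self 1 i
    have hCC2 : ∀ Y : NOp n, C * (C * Y) = Y := fun Y => by
      rw [← Matrix.mul_assoc, hCC, Matrix.one_mul]
    have hHC : ∀ τ, H τ * C = C * H τ := by
      intro τ
      calc H τ * C = (C * H τ * C) * C := by
            rw [swap_conj_centralH 1 i h10 hi0 (H0 τ) (fun μ => V μ τ)]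
        _ = C * H τ * (C * C) := by rw [Matrix.mul_assoc]
        _ = C * H τ := by rw [hCC, Matrix.mul_one]
    have hder : ∀ τ, MDeriv (fun r => C * (U r)ᴴ * C * U r) 0 τ := by
      intro τ
      have h1 := (MDeriv.zero_const C τ).mul (hUH' τ)
      have h2 := h1.mul (MDeriv.zero_const C τ)
      have h3 := h2.mul (hU' τ)
      refine h3.congr_deriv ?_
      simp only [Matrix.zero_mul, Matrix.mul_zero, zero_add, add_zero]
      rw [Matrix.mul_smul C, Matrix.smul_mul, Matrix.smul_mul, Matrix.mul_smul, neg_smul]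
      rw [show (C * ((U τ)ᴴ * H τ)) * C * U τ = (C * (U τ)ᴴ * C) * (H τ * U τ) from by
        calc (C * ((U τ)ᴴ * H τ)) * C * U τ
            = (C * (U τ)ᴴ) * (H τ * C) * U τ := by
              rw [← Matrix.mul_assoc C (U τ)ᴴ (H τ),
                Matrix.mul_assoc (C * (U τ)ᴴ) (H τ) C]
          _ = (C * (U τ)ᴴ) * (C * H τ) * U τ := by rw [hHC τ]
          _ = (C * (U τ)ᴴ * C) * (H τ * U τ) := by
              rw [← Matrix.mul_assoc (C * (U τ)ᴴ) C (H τ),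
                Matrix.mul_assoc (C * (U τ)ᴴ * C) (H τ) (U τ)]]
      exact add_neg_cancel _
    have hW : C * (U s)ᴴ * C * U s = 1 := by
      have h5 := MDeriv.eq_const hder s
      rw [h5, hU0]
      simp [hCC]
    have hUHsym : C * (U s)ᴴ * C = (U s)ᴴ := by
      calc C * (U s)ᴴ * C
          = (C * (U s)ᴴ * C) * (U s * (U s)ᴴ) := by rw [hUunit', Matrix.mul_one]
        _ = ((C * (U s)ᴴ * C) * U s) * (U s)ᴴ := by
            rw [← Matrix.mul_assoc (C * (U s)ᴴ * C) (U s) ((U s)ᴴ)]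
        _ = (U s)ᴴ := by rw [hW, Matrix.one_mul]
    have hUsym : C * U s * C = U s := by
      have h6 := congrArg Matrix.conjTranspose hUHsym
      rw [Matrix.conjTranspose_mul, Matrix.conjTranspose_mul,
        Matrix.conjTranspose_conjTranspose] at h6
      rw [hCdef] at h6
      rw [swapOp_conjTranspose] at h6
      rw [← hCdef, ← Matrix.mul_assoc] at h6
      exact h6
    have hPsym : C * P * C = P := swap_conj_prodState 1 i φ
    calc C * (U s * P * (U s)ᴴ) * C
        = (C * U s * C) * (C * P * C) * (C * (U s)ᴴ * C) := by
          simp only [Matrix.mul_assoc, hCC2]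
      _ = ρ s := by rw [hUsym, hPsym, hUHsym]
  set rc : ℝ → Op2 := fun s => ptraceC (ρ s) with hrcdef
  set K : ℝ → Op2 := fun s => ptrace2 ((Vint fun μ => V μ s) * ptrace01 (ρ s)
      - ptrace01 (ρ s) * (Vint fun μ => V μ s)) with hKdef
  have hmain : ∀ s, ptraceC (H s * ρ s - ρ s * H s)
      = (H0 s * rc s - rc s * H0 s) + K s := by
    intro s
    set Mv : Op4 := Vint fun μ => V μ s with hMvdef
    set A : NOp n := ∑ i, onSite i (H0 s) with hAdef
    set c : ℂ := ((n : ℂ) - 1)⁻¹ with hcdef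
    set B : NOp n := ∑ i ∈ Finset.univ.erase (0 : Fin n), onPair 0 i Mv with hBdef
    have hHexp : H s = A + c • B := rfl
    rw [hHexp, Matrix.add_mul, Matrix.mul_add, Matrix.smul_mul, Matrix.mul_smul]
    rw [show A * ρ s + c • (B * ρ s) - (ρ s * A + c • (ρ s * B))
        = (A * ρ s - ρ s * A) + c • (B * ρ s - ρ s * B) from by
      rw [smul_sub]; abel]
    rw [ptraceC_add, ptraceC_smul]
    have part1 : ptraceC (A * ρ s - ρ s * A) = H0 s * rc s - rc s * H0 s := by
      rw [hAdef, Finset.sum_mul, Finset.mul_sum, ← Finset.sum_sub_distrib, ptraceC_sum]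
      rw [Finset.sum_eq_single_of_mem (0 : Fin n) (Finset.mem_univ 0)
        (fun i _ hi => by rw [ptraceC_sub, ptraceC_onSite_comm i hi (H0 s) (ρ s), sub_self])]
      rw [ptraceC_sub, ptraceC_onSite0_mul, ptraceC_mul_onSite0]
    have hTi : ∀ i ∈ Finset.univ.erase (0 : Fin n),
        ptraceC (onPair 0 i Mv * ρ s - ρ s * onPair 0 i Mv)
          = ptraceC (onPair 0 1 Mv * ρ s - ρ s * onPair 0 1 Mv) := by
      intro i hi
      have hi0 : i ≠ 0 := (Finset.mem_erase.mp hi).1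
      by_cases hi1 : i = 1
      · rw [hi1]
      · have hCC : swapOp n 1 i * swapOp n 1 i = 1 := swapOp_mul_self 1 i
        have hCC2 : ∀ Y : NOp n, swapOp n 1 i * (swapOp n 1 i * Y) = Y := fun Y => by
          rw [← Matrix.mul_assoc, hCC, Matrix.one_mul]
        have hCi : swapOp n 1 i * onPair 0 1 Mv * swapOp n 1 i = onPair 0 i Mv := by
          have h7 := swap_conj_onPair 1 i 0 1 Mv
          rwa [Equiv.swap_apply_of_ne_of_ne h01 (Ne.symm hi0), Equiv.swap_apply_left] at h7
        have e1 : swapOp n 1 i * (onPair 0 1 Mv * ρ s) * swapOp n 1 i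
            = onPair 0 i Mv * ρ s := by
          rw [show swapOp n 1 i * (onPair 0 1 Mv * ρ s) * swapOp n 1 i
              = (swapOp n 1 i * onPair 0 1 Mv * swapOp n 1 i)
                * (swapOp n 1 i * ρ s * swapOp n 1 i) from by
            simp only [Matrix.mul_assoc, hCC2]]
          rw [hCi, hρswap i hi0 hi1 s]
        have e2 : swapOp n 1 i * (ρ s * onPair 0 1 Mv) * swapOp n 1 i
            = ρ s * onPair 0 i Mv := by
          rw [show swapOp n 1 i * (ρ s * onPair 0 1 Mv) * swapOp n 1 i
              = (swapOp n 1 i * ρ s * swapOp n 1 i)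
                * (swapOp n 1 i * onPair 0 1 Mv * swapOp n 1 i) from by
            simp only [Matrix.mul_assoc, hCC2]]
          rw [hCi, hρswap i hi0 hi1 s]
        have hX : onPair 0 i Mv * ρ s - ρ s * onPair 0 i Mv
            = swapOp n 1 i * (onPair 0 1 Mv * ρ s - ρ s * onPair 0 1 Mv) * swapOp n 1 i := by
          rw [Matrix.mul_sub, Matrix.sub_mul, e1, e2]
        rw [hX, ptraceC_swap_conj 1 i h10 hi0]
    have part2 : ptraceC (B * ρ s - ρ s * B)
        = (n - 1 : ℕ) • ptraceC (onPair 0 1 Mv * ρ s - ρ s * onPair 0 1 Mv) := by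
      rw [hBdef, Finset.sum_mul, Finset.mul_sum, ← Finset.sum_sub_distrib, ptraceC_sum]
      rw [Finset.sum_congr rfl hTi, Finset.sum_const, Finset.card_erase_of_mem
        (Finset.mem_univ 0), Finset.card_univ, Fintype.card_fin]
    rw [part1, part2]
    congr 1
    rw [← Nat.cast_smul_eq_nsmul ℂ, smul_smul]
    have hcast : ((n - 1 : ℕ) : ℂ) = (n : ℂ) - 1 := by
      push_cast [Nat.cast_sub (by omega : 1 ≤ n)]
      ring
    rw [hcast, hcdef, inv_mul_cancel₀ (by
      rw [← hcast]
      exact_mod_cast Nat.cast_ne_zero.mpr (by omega : n - 1 ≠ 0)), one_smul]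
    rw [ptraceC_sub, ptraceC_onPair_mul h01, ptraceC_mul_onPair h01, hKdef]
    show _ = ptrace2 (Mv * ptrace01 (ρ s) - ptrace01 (ρ s) * Mv)
    rw [ptrace2_sub]
  have hρ' : ∀ s, MDeriv ρ ((-Complex.I) • (H s * ρ s - ρ s * H s)) s := by
    intro s
    have h1 := ((hU' s).mul (MDeriv.zero_const P s)).mul (hUH' s)
    exact h1.congr_deriv (deriv_alg_rho (H s) (U s) P ((U s)ᴴ))
  have hrc' : ∀ s, MDeriv rc ((-Complex.I) • ((H0 s * rc s - rc s * H0 s) + K s)) s := by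
    intro s
    refine ((hρ' s).ptraceC).congr_deriv ?_
    rw [ptraceC_smul, hmain s]
  have hh' : ∀ s, MDeriv (fun τ => (u τ)ᴴ * rc τ * u τ)
      ((u s)ᴴ * ((-Complex.I) • K s) * u s) s := by
    intro s
    have h1 := ((huH' s).mul (hrc' s)).mul (hu' s)
    exact h1.congr_deriv (deriv_alg_h ((u s)ᴴ) (rc s) (H0 s) (K s) (u s))
  -- continuity
  have contU : MCont U := MDeriv.cont (fun s => ⟨_, hU' s⟩)
  have contu : MCont u := MDeriv.cont (fun s => ⟨_, hu' s⟩)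
  have contρ : MCont ρ := (contU.mul (MCont.const P)).mul contU.conjTranspose
  have contV : MCont (fun s => Vint fun μ => V μ s) := MCont.vint hVcont
  have contK : MCont K :=
    MCont.ptrace2 ((contV.mul contρ.ptrace01).sub (contρ.ptrace01.mul contV))
  have conth' : MCont (fun s => (u s)ᴴ * ((-Complex.I) • K s) * u s) :=
    (contu.conjTranspose.mul (MCont.smul continuous_const contK)).mul contu
  intro t ht a b
  have e := conj_unitary_id (huunit' t) (rc t)
  have hFTC : ∀ k l : Fin 2,
      (∫ τ in (0:ℝ)..t, ((u τ)ᴴ * ((-Complex.I) • K τ) * u τ) k l)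
        = ((u t)ᴴ * rc t * u t) k l - ((u 0)ᴴ * rc 0 * u 0) k l := by
    intro k l
    exact intervalIntegral.integral_eq_sub_of_hasDerivAt
      (fun τ _ => hh' τ k l) ((conth' k l).intervalIntegrable _ _)
  have hrc0 : rc 0 = proj φ := by
    show ptraceC (U 0 * P * (U 0)ᴴ) = proj φ
    rw [hU0, Matrix.conjTranspose_one, Matrix.one_mul, Matrix.mul_one, hPdef]
    exact ptraceC_prodState φ hφ
  have h0val : (u 0)ᴴ * rc 0 * u 0 = proj φ := by
    rw [hu0, hrc0, Matrix.conjTranspose_one, Matrix.one_mul, Matrix.mul_one]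
  have hentry : ∀ k l : Fin 2, ((u t)ᴴ * rc t * u t) k l
      = proj φ k l + ∫ τ in (0:ℝ)..t, ((u τ)ᴴ * ((-Complex.I) • K τ) * u τ) k l := by
    intro k l
    rw [hFTC k l, h0val]
    ring
  have hcont2 : ∀ k j : Fin 2, Continuous fun τ =>
      u t a k * ((u τ)ᴴ * ((-Complex.I) • K τ) * u τ) k j * (u t)ᴴ j b :=
    fun k j => (continuous_const.mul (conth' k j)).mul continuous_const
  have hint : ∀ τ : ℝ, (u t * ((u τ)ᴴ * ((-Complex.I) • K τ) * u τ) * (u t)ᴴ)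
      = ((-Complex.I) • ((u t * (u τ)ᴴ) *
          ptrace2 (matComm (Vint fun μ => V μ τ)
            (ptrace01 (U τ * P * (U τ)ᴴ))) * (u t * (u τ)ᴴ)ᴴ)) := by
    intro τ
    have hKeq : ptrace2 (matComm (Vint fun μ => V μ τ)
        (ptrace01 (U τ * P * (U τ)ᴴ))) = K τ := rfl
    rw [hKeq, Matrix.conjTranspose_mul, Matrix.conjTranspose_conjTranspose]
    simp only [Matrix.mul_smul, Matrix.smul_mul, Matrix.mul_assoc]
  calc ptraceC (U t * P * (U t)ᴴ) a b
      = (u t * ((u t)ᴴ * rc t * u t) * (u t)ᴴ) a b := (congrFun (congrFun e a) b).symm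
    _ = ∑ j, ∑ k, u t a k * ((u t)ᴴ * rc t * u t) k j * (u t)ᴴ j b := mul3_apply _ _ _ a b
    _ = (∑ j, ∑ k, u t a k * proj φ k j * (u t)ᴴ j b)
        + ∑ j, ∑ k, u t a k *
            (∫ τ in (0:ℝ)..t, ((u τ)ᴴ * ((-Complex.I) • K τ) * u τ) k j) * (u t)ᴴ j b := by
        simp only [hentry, mul_add, add_mul, Finset.sum_add_distrib]
    _ = (u t * proj φ * (u t)ᴴ) a b
        + ∫ τ in (0:ℝ)..t, (u t * ((u τ)ᴴ * ((-Complex.I) • K τ) * u τ) * (u t)ᴴ) a b := by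
        congr 1
        · exact (mul3_apply _ _ _ a b).symm
        · have step1 : ∀ j k : Fin 2, u t a k *
              (∫ τ in (0:ℝ)..t, ((u τ)ᴴ * ((-Complex.I) • K τ) * u τ) k j) * (u t)ᴴ j b
              = ∫ τ in (0:ℝ)..t,
                  u t a k * ((u τ)ᴴ * ((-Complex.I) • K τ) * u τ) k j * (u t)ᴴ j b := by
            intro j k
            rw [← intervalIntegral.integral_const_mul, ← intervalIntegral.integral_mul_const]
          rw [Finset.sum_congr rfl fun j _ => Finset.sum_congr rfl fun k _ => step1 j k]
          rw [Finset.sum_congr rfl fun j _ =>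
            (intervalIntegral.integral_finset_sum
              (fun k _ => (hcont2 k j).intervalIntegrable 0 t)).symm]
          rw [(intervalIntegral.integral_finset_sum
            (fun j _ => (continuous_finset_sum Finset.univ
              (fun k _ => hcont2 k j)).intervalIntegrable 0 t)).symm]
          refine intervalIntegral.integral_congr fun τ _ => ?_
          exact (mul3_apply _ _ _ a b).symm
    _ = (u t * proj φ * (u t)ᴴ) a b
        + ∫ τ in (0:ℝ)..t,
            (((-Complex.I) • ((u t * (u τ)ᴴ) *
              ptrace2 (matComm (Vint fun μ => V μ τ)
                (ptrace01 (U τ * P * (U τ)ᴴ))) *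
              (u t * (u τ)ᴴ)ᴴ)) a b) := by
        congr 1
        refine intervalIntegral.integral_congr fun τ _ => ?_
        rw [hint τ]

end
end

section
/- Grönwall-type iteration lemma (second form): let a, b ≥ 0 and c ≥ 2a with a > 0, and let f : [0,∞) → ℝ be continuous with 0 ≤ f(t) ≤ 2 for all t, satisfying f(t) ≤ a ∫₀^t f(τ) dτ + b (e^{ct} − 1) for all t ≥ 0. Then f(t) ≤ 2b (e^{ct} − 1) for all t ≥ 0. -/
open Matrix Finset
open scoped Kronecker ComplexConjugate

noncomputable section

open intervalIntegral

theorem statement17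
    (a b c : ℝ) (ha : 0 < a) (hb : 0 ≤ b) (hc : 2 * a ≤ c)
    (f : ℝ → ℝ) (hfcont : ContinuousOn f (Set.Ici 0))
    (hfbd : ∀ t : ℝ, 0 ≤ t → 0 ≤ f t ∧ f t ≤ 2)
    (hineq : ∀ t : ℝ, 0 ≤ t →
      f t ≤ a * (∫ τ in (0:ℝ)..t, f τ) + b * (Real.exp (c * t) - 1)) :
    ∀ t : ℝ, 0 ≤ t → f t ≤ 2 * b * (Real.exp (c * t) - 1) := by
  have hc0 : 0 < c := lt_of_lt_of_le (by linarith) hc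
  have hexp : ∀ t : ℝ, 0 ≤ t → 0 ≤ Real.exp (c * t) - 1 := by
    intro t ht
    have : (1:ℝ) ≤ Real.exp (c * t) := Real.one_le_exp (by positivity)
    linarith
  -- key induction
  have key : ∀ q : ℕ, ∀ t : ℝ, 0 ≤ t →
      f t ≤ 2 * (a * t) ^ q / q.factorial + 2 * b * (Real.exp (c * t) - 1) := by
    intro q
    induction q with
    | zero =>
      intro t ht
      have := (hfbd t ht).2
      have := hexp t ht
      simp only [pow_zero, Nat.factorial_zero, Nat.cast_one, mul_one, div_one]
      nlinarith
    | succ q ih =>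
      intro t ht
      -- integrability
      have hfInt : IntervalIntegrable f MeasureTheory.volume 0 t := by
        apply (hfcont.mono ?_).intervalIntegrable
        rw [Set.uIcc_of_le ht]
        exact fun x hx => hx.1
      have hgInt : IntervalIntegrable
          (fun τ => 2 * (a * τ) ^ q / q.factorial + 2 * b * (Real.exp (c * τ) - 1))
          MeasureTheory.volume 0 t := by
        apply Continuous.intervalIntegrable; fun_prop
      have hmono : (∫ τ in (0:ℝ)..t, f τ) ≤
          ∫ τ in (0:ℝ)..t, (2 * (a * τ) ^ q / q.factorial + 2 * b * (Real.exp (c * τ) - 1)) := by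
        apply integral_mono_on ht hfInt hgInt
        intro x hx
        exact ih x hx.1
      -- compute the integral
      have hI1 : (∫ τ in (0:ℝ)..t, (a * τ) ^ q) = a ^ q * (t ^ (q + 1) / (q + 1)) := by
        have : (fun τ : ℝ => (a * τ) ^ q) = fun τ : ℝ => a ^ q * τ ^ q := by
          funext τ; rw [mul_pow]
        rw [this, integral_const_mul, integral_pow]
        ring
      have hI2 : (∫ τ in (0:ℝ)..t, Real.exp (c * τ)) = (Real.exp (c * t) - 1) / c := by
        rw [integral_comp_mul_left (fun x => Real.exp x) (ne_of_gt hc0)]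
        simp [integral_exp, smul_eq_mul]
        ring
      have hIg : (∫ τ in (0:ℝ)..t, (2 * (a * τ) ^ q / q.factorial + 2 * b * (Real.exp (c * τ) - 1)))
          = 2 * (a ^ q * (t ^ (q + 1) / (q + 1))) / q.factorial
            + 2 * b * ((Real.exp (c * t) - 1) / c - t) := by
        have e1 : (fun τ : ℝ => 2 * (a * τ) ^ q / q.factorial + 2 * b * (Real.exp (c * τ) - 1))
            = fun τ : ℝ => (2 / q.factorial) * (a * τ) ^ q
              + (2 * b * Real.exp (c * τ) + (-(2 * b))) := by
          funext τ; ring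
        rw [e1, integral_add, integral_add,
          integral_const_mul, integral_const_mul,
          hI1, hI2, integral_const]
        · simp only [smul_eq_mul]; ring
        · apply Continuous.intervalIntegrable; fun_prop
        · apply Continuous.intervalIntegrable; fun_prop
        · apply Continuous.intervalIntegrable; fun_prop
        · apply Continuous.intervalIntegrable; fun_prop
      calc f t ≤ a * (∫ τ in (0:ℝ)..t, f τ) + b * (Real.exp (c * t) - 1) := hineq t ht
        _ ≤ a * (2 * (a ^ q * (t ^ (q + 1) / (q + 1))) / q.factorial
              + 2 * b * ((Real.exp (c * t) - 1) / c - t)) + b * (Real.exp (c * t) - 1) := by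
            rw [← hIg]; exact add_le_add_left (mul_le_mul_of_nonneg_left hmono ha.le) _
        _ ≤ 2 * (a * t) ^ (q + 1) / (q.factorial * (q + 1)) + 2 * b * (Real.exp (c * t) - 1) := by
            have h1 : a * (2 * (a ^ q * (t ^ (q + 1) / (q + 1)))) / q.factorial
                = 2 * (a * t) ^ (q + 1) / (q.factorial * (q + 1)) := by
              rw [mul_pow]; field_simp; ring
            have h2 : a * (2 * b * ((Real.exp (c * t) - 1) / c - t)) + b * (Real.exp (c * t) - 1)
                ≤ 2 * b * (Real.exp (c * t) - 1) := by
              have hE := hexp t ht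
              have h3 : a * (2 * b * ((Real.exp (c * t) - 1) / c))
                  ≤ b * (Real.exp (c * t) - 1) := by
                rw [div_eq_mul_inv]
                have h4 : 2 * a * c⁻¹ ≤ 1 := by
                  rw [← le_div_iff₀ (inv_pos.mpr hc0)]
                  simpa [one_div, inv_inv] using hc
                nlinarith [mul_nonneg hb hE, mul_nonneg (mul_nonneg hb hE) (inv_pos.mpr hc0).le]
              nlinarith [mul_nonneg (mul_nonneg ha.le hb) ht]
            calc a * (2 * (a ^ q * (t ^ (q + 1) / (q + 1))) / q.factorial
                  + 2 * b * ((Real.exp (c * t) - 1) / c - t)) + b * (Real.exp (c * t) - 1)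
                = a * (2 * (a ^ q * (t ^ (q + 1) / (q + 1)))) / q.factorial
                  + (a * (2 * b * ((Real.exp (c * t) - 1) / c - t))
                    + b * (Real.exp (c * t) - 1)) := by ring
              _ ≤ 2 * (a * t) ^ (q + 1) / (q.factorial * (q + 1))
                  + 2 * b * (Real.exp (c * t) - 1) := by rw [h1]; linarith
        _ = 2 * (a * t) ^ (q + 1) / (q + 1).factorial + 2 * b * (Real.exp (c * t) - 1) := by
            rw [Nat.factorial_succ]; push_cast; ring
  -- limit
  intro t ht
  have hlim : Filter.Tendsto (fun q : ℕ => 2 * (a * t) ^ q / q.factorial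
      + 2 * b * (Real.exp (c * t) - 1)) Filter.atTop
      (nhds (0 + 2 * b * (Real.exp (c * t) - 1))) := by
    apply Filter.Tendsto.add_const
    have := (FloorSemiring.tendsto_pow_div_factorial_atTop (a * t)).const_mul (2:ℝ)
    simpa [mul_div_assoc, mul_zero] using this
  rw [zero_add] at hlim
  exact ge_of_tendsto hlim (Filter.Eventually.of_forall fun q => key q t ht)


end
end
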